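/- arXiv:1008.1968 — 6 statements merged into one kernel-verified Lean document; each statement's English description precedes it below -/
import Mathlib

section
/- Let 0 < ε ≤ 1/2. Suppose there exists a positive integer n(ε) such that for all n > n(ε), (1−ε)·2C₂ f(n) n/log²n ≤ R(2n) ≤ (1+ε)·2C₂ f(n) n/log²n. Then there exists a constant m(ε) such that for all m > m(ε), (1−2ε)·2C₂ J(m) m/log²m ≤ a(2m) ≤ (1+11ε)·2C₂ J(m) m/log²m. -/
/-- `R n` is the number of ordered pairs `(p, q)` of odd primes with `p + q = n`. -/
noncomputable def R (n : ℕ) : ℕ :=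
  {pq : ℕ × ℕ | pq.1.Prime ∧ Odd pq.1 ∧ pq.2.Prime ∧ Odd pq.2 ∧ pq.1 + pq.2 = n}.ncard

/-- `a m = ∑_{d ∣ m} R d`. -/
noncomputable def a (m : ℕ) : ℕ := ∑ d ∈ m.divisors, R d

/-- `f n = ∏_{p ∣ n, p > 2} (p - 1)/(p - 2)`. -/
noncomputable def f (n : ℕ) : ℝ :=
  ∏ p ∈ n.primeFactors.filter (fun p => 2 < p), ((p : ℝ) - 1) / ((p : ℝ) - 2)

/-- The twin primes constant `C₂ = ∏_{p > 2} (1 - 1/(p-1)²)`. -/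
noncomputable def C₂ : ℝ :=
  ∏' p : {p : ℕ // p.Prime ∧ 2 < p}, (1 - 1 / ((p.1 : ℝ) - 1) ^ 2)

/-- `J m = (2 - 1/2^k) ∏_{p^ℓ ∥ m, p > 2} (1 - 2/p^{ℓ+1})(1 - 2/p)⁻¹`
where `2^k ∥ m`. -/
noncomputable def J (m : ℕ) : ℝ :=
  (2 - 1 / 2 ^ (m.factorization 2)) *
    ∏ p ∈ m.primeFactors.filter (fun p => 2 < p),
      (1 - 2 / (p : ℝ) ^ (m.factorization p + 1)) * (1 - 2 / (p : ℝ))⁻¹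

/-! ### Auxiliary lemmas about `R` -/

lemma Rset_finite (n : ℕ) :
    {pq : ℕ × ℕ | pq.1.Prime ∧ Odd pq.1 ∧ pq.2.Prime ∧ Odd pq.2 ∧ pq.1 + pq.2 = n}.Finite := by
  apply Set.Finite.subset (Set.finite_Iio (n+1) |>.prod (Set.finite_Iio (n+1)))
  rintro ⟨p, q⟩ ⟨hp, _, hq, _, hpq⟩
  constructor <;> simp only [Set.mem_Iio] <;> omega

lemma R_le (n : ℕ) : R n ≤ n := by
  have h := Set.ncard_le_ncard_of_injOn (Prod.fst)
    (s := {pq : ℕ × ℕ | pq.1.Prime ∧ Odd pq.1 ∧ pq.2.Prime ∧ Odd pq.2 ∧ pq.1 + pq.2 = n})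
    (t := Set.Iio n) ?_ ?_ (Set.finite_Iio n)
  · calc R n ≤ (Set.Iio n).ncard := h
      _ = n := by rw [← Finset.coe_range, Set.ncard_coe_finset, Finset.card_range]
  · rintro ⟨p, q⟩ ⟨hp, _, hq, _, hpq⟩
    simp only [Set.mem_Iio]
    have := hq.two_le
    omega
  · rintro ⟨p, q⟩ ⟨hp, _, hq, _, hpq⟩ ⟨p', q'⟩ ⟨hp', _, hq', _, hpq'⟩ hfst
    simp only at hfst
    subst hfst
    simp only [Prod.mk.injEq, true_and]
    omega

lemma R_odd (n : ℕ) (hn : ¬ Even n) : R n = 0 := by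
  rw [R, Set.ncard_eq_zero (Rset_finite n)]
  ext ⟨p, q⟩
  simp only [Set.mem_setOf_eq, Set.mem_empty_iff_false, iff_false]
  rintro ⟨hp, hop, hq, hoq, hpq⟩
  exact hn (hpq ▸ hop.add_odd hoq)

lemma R_one_le (p : ℕ) (hp : p.Prime) (hodd : Odd p) : 1 ≤ R (2 * p) := by
  rw [R]
  rw [Nat.one_le_iff_ne_zero, Ne, Set.ncard_eq_zero (Rset_finite _), ← Ne,
    ← Set.nonempty_iff_ne_empty]
  exact ⟨(p, p), hp, hodd, hp, hodd, by ring⟩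

/-! ### Auxiliary lemmas about `f` and `J` -/

lemma one_le_prod_real {α : Type*} {s : Finset α} {g : α → ℝ} (h : ∀ i ∈ s, (1:ℝ) ≤ g i) :
    1 ≤ ∏ i ∈ s, g i := by
  calc (1:ℝ) = ∏ _i ∈ s, 1 := by simp
  _ ≤ ∏ i ∈ s, g i := Finset.prod_le_prod (fun _ _ => zero_le_one) h

lemma prod_le_prod_subset_real {α : Type*} [DecidableEq α] {s t : Finset α} {g : α → ℝ}
    (hst : s ⊆ t) (h1 : ∀ i ∈ t, (1:ℝ) ≤ g i) : ∏ i ∈ s, g i ≤ ∏ i ∈ t, g i := by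
  rw [← Finset.prod_sdiff hst]
  have h0 : 0 ≤ ∏ i ∈ s, g i :=
    Finset.prod_nonneg fun i hi => le_trans zero_le_one (h1 i (hst hi))
  have h2 : 1 ≤ ∏ i ∈ t \ s, g i :=
    one_le_prod_real fun i hi => h1 i (Finset.mem_sdiff.mp hi).1
  nlinarith

lemma mem_filt {n p : ℕ} (hp : p ∈ n.primeFactors.filter (fun p => 2 < p)) :
    3 ≤ p ∧ p.Prime ∧ p ∣ n ∧ n ≠ 0 := by
  simp only [Finset.mem_filter, Nat.mem_primeFactors] at hp
  exact ⟨hp.2, hp.1.1, hp.1.2.1, hp.1.2.2⟩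

lemma one_le_f (n : ℕ) : 1 ≤ f n := by
  rw [f]
  apply one_le_prod_real
  intro p hp
  obtain ⟨h3, -⟩ := mem_filt hp
  have : (3:ℝ) ≤ p := by exact_mod_cast h3
  rw [le_div_iff₀ (by linarith)]
  linarith

lemma f_nonneg (n : ℕ) : 0 ≤ f n := le_trans zero_le_one (one_le_f n)

lemma f_dvd_le {d m : ℕ} (hd : d ∣ m) (hm : m ≠ 0) : f d ≤ f m := by
  rw [f, f]
  apply prod_le_prod_subset_real
  · apply Finset.filter_subset_filter
    exact Nat.primeFactors_mono hd hm
  · intro p hp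
    obtain ⟨h3, -⟩ := mem_filt hp
    have : (3:ℝ) ≤ p := by exact_mod_cast h3
    rw [le_div_iff₀ (by linarith)]
    linarith

lemma J_factor_facts {m p : ℕ} (hp : p ∈ m.primeFactors.filter (fun p => 2 < p)) :
    ((p:ℝ) - 1) / ((p:ℝ) - 2) ≤ (1 - 2 / (p : ℝ) ^ (m.factorization p + 1)) * (1 - 2 / (p : ℝ))⁻¹
    ∧ 1 ≤ (1 - 2 / (p : ℝ) ^ (m.factorization p + 1)) * (1 - 2 / (p : ℝ))⁻¹ := by
  obtain ⟨h3, hpp, hdvd, hm0⟩ := mem_filt hp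
  have hp3 : (3:ℝ) ≤ p := by exact_mod_cast h3
  have hp0 : (0:ℝ) < p := by linarith
  have hℓ : 1 ≤ m.factorization p := by
    rw [← Nat.Prime.dvd_iff_one_le_factorization hpp hm0]
    exact hdvd
  set ℓ := m.factorization p with hℓdef
  have hpow : (p:ℝ)^2 ≤ (p:ℝ)^(ℓ+1) := by
    apply pow_le_pow_right₀ (by linarith)
    omega
  have hpow0 : (0:ℝ) < (p:ℝ)^(ℓ+1) := by positivity
  have h2p : 0 < 1 - 2/(p:ℝ) := by
    rw [sub_pos, div_lt_one hp0]; linarith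
  have hA : 2*(p:ℝ) ≤ (p:ℝ)^(ℓ+1) := by nlinarith
  have heq : (1 - 2/(p:ℝ)^(ℓ+1)) * (1 - 2/(p:ℝ))⁻¹
      = ((p:ℝ) - 2*(p:ℝ)/(p:ℝ)^(ℓ+1))/((p:ℝ)-2) := by
    field_simp
  have key : ((p:ℝ) - 1) / ((p:ℝ) - 2)
      ≤ (1 - 2 / (p : ℝ) ^ (ℓ + 1)) * (1 - 2 / (p : ℝ))⁻¹ := by
    rw [heq, div_le_div_iff_of_pos_right (by linarith)]
    have : 2*(p:ℝ)/(p:ℝ)^(ℓ+1) ≤ 1 := by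
      rw [div_le_one hpow0]; exact hA
    linarith
  refine ⟨key, le_trans ?_ key⟩
  rw [le_div_iff₀ (by linarith)]
  linarith

lemma f_le_J (m : ℕ) : f m ≤ J m := by
  have h2 : (1:ℝ) ≤ 2 - 1 / 2 ^ (m.factorization 2) := by
    have : (1:ℝ)/2^(m.factorization 2) ≤ 1 := by
      rw [div_le_one (by positivity)]
      exact one_le_pow₀ (by norm_num)
    linarith
  have hprod : f m ≤ ∏ p ∈ m.primeFactors.filter (fun p => 2 < p),
      (1 - 2 / (p : ℝ) ^ (m.factorization p + 1)) * (1 - 2 / (p : ℝ))⁻¹ := by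
    rw [f]
    apply Finset.prod_le_prod
    · intro p hp
      obtain ⟨h3, -⟩ := mem_filt hp
      have : (3:ℝ) ≤ p := by exact_mod_cast h3
      apply div_nonneg <;> linarith
    · intro p hp
      exact (J_factor_facts hp).1
  have hprod1 : (1:ℝ) ≤ ∏ p ∈ m.primeFactors.filter (fun p => 2 < p),
      (1 - 2 / (p : ℝ) ^ (m.factorization p + 1)) * (1 - 2 / (p : ℝ))⁻¹ :=
    one_le_prod_real fun p hp => (J_factor_facts hp).2
  rw [J]
  nlinarith [f_nonneg m, one_le_f m]

lemma one_le_J (m : ℕ) : 1 ≤ J m := le_trans (one_le_f m) (f_le_J m)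

lemma J_nonneg (m : ℕ) : 0 ≤ J m := le_trans zero_le_one (one_le_J m)

/-! ### The divisor-sum identity `∑_{d ∣ m} f(d) d = J(m) m` -/

open ArithmeticFunction in
lemma f_one : f 1 = 1 := by simp [f]

lemma f_mul_coprime {m n : ℕ} (h : Nat.Coprime m n) :
    f (m * n) = f m * f n := by
  rw [f, f, f, Nat.Coprime.primeFactors_mul h, Finset.filter_union]
  apply Finset.prod_union
  apply Finset.disjoint_filter_filter
  exact Nat.Coprime.disjoint_primeFactors h

noncomputable def Faux : ArithmeticFunction ℝ :=
  ⟨fun n => if n = 0 then 0 else f n * n, by simp⟩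

lemma Faux_apply {n : ℕ} (hn : n ≠ 0) : Faux n = f n * n := by
  simp [Faux, hn, ArithmeticFunction.coe_mk]

lemma Faux_isMult : Faux.IsMultiplicative := by
  rw [ArithmeticFunction.IsMultiplicative.iff_ne_zero]
  constructor
  · rw [Faux_apply one_ne_zero, f_one]; norm_num
  · intro m n hm hn h
    rw [Faux_apply (mul_ne_zero hm hn), Faux_apply hm, Faux_apply hn, f_mul_coprime h]
    push_cast
    ring

lemma f_prime_pow_two (j : ℕ) : f (2 ^ j) = 1 := by
  rcases Nat.eq_zero_or_pos j with rfl | hj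
  · simpa using f_one
  · rw [f, Nat.primeFactors_prime_pow hj.ne' Nat.prime_two]
    rw [Finset.filter_singleton]
    norm_num

lemma f_prime_pow_odd {p : ℕ} (hp : p.Prime) (hp2 : 2 < p) {j : ℕ} (hj : j ≠ 0) :
    f (p ^ j) = ((p : ℝ) - 1) / ((p : ℝ) - 2) := by
  rw [f, Nat.primeFactors_prime_pow hj hp, Finset.filter_singleton, if_pos hp2,
    Finset.prod_singleton]

noncomputable def hval (p k : ℕ) : ℝ :=
  if p = 2 then ((2:ℝ) - 1/2^k) * 2^k
  else (1 - 2/(p:ℝ)^(k+1)) * (1 - 2/(p:ℝ))⁻¹ * (p:ℝ)^k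

lemma sum_fd_prime_pow {p : ℕ} (hp : p.Prime) (k : ℕ) :
    ∑ j ∈ Finset.range (k+1), f (p^j) * ((p:ℝ))^j = hval p k := by
  rcases eq_or_ne p 2 with rfl | hp2
  · simp only [f_prime_pow_two, one_mul, hval, if_pos rfl, ↓reduceIte]
    rw [geom_sum_eq (by norm_num) (k+1)]
    have h2k : (2:ℝ)^k ≠ 0 := by positivity
    field_simp
    ring
  · have h2p : 2 < p := lt_of_le_of_ne hp.two_le (Ne.symm hp2)
    have hp3 : (3:ℝ) ≤ p := by exact_mod_cast h2p
    set c : ℝ := ((p : ℝ) - 1) / ((p : ℝ) - 2) with hc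
    have hsum : ∑ j ∈ Finset.range (k+1), f (p^j) * ((p:ℝ))^j
        = 1 + c * ((p:ℝ) * ∑ j ∈ Finset.range k, ((p:ℝ))^j) := by
      rw [Finset.sum_range_succ']
      have hterm : ∀ j ∈ Finset.range k, f (p^(j+1)) * ((p:ℝ))^(j+1) = c * ((p:ℝ) * (p:ℝ)^j) := by
        intro j hj
        rw [f_prime_pow_odd hp h2p (Nat.succ_ne_zero j), pow_succ]
        ring
      rw [Finset.sum_congr rfl hterm, ← Finset.mul_sum, ← Finset.mul_sum]
      simp only [pow_zero, f_one, one_mul]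
      ring
    rw [hsum, geom_sum_eq (by intro h; rw [h] at hp3; norm_num at hp3) k]
    rw [hval, if_neg hp2, hc]
    have hp0 : (p:ℝ) ≠ 0 := by linarith
    have hp1 : (p:ℝ) - 1 ≠ 0 := by linarith
    have hpm2 : (p:ℝ) - 2 ≠ 0 := by linarith
    have hpk : ((p:ℝ))^k ≠ 0 := by positivity
    have h2dp : 1 - 2/(p:ℝ) ≠ 0 := by
      have : 2/(p:ℝ) < 1 := by rw [div_lt_one (by linarith)]; linarith
      linarith
    field_simp
    ring

open ArithmeticFunction ArithmeticFunction.zeta in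
lemma zetaF_apply (m : ℕ) (hm : m ≠ 0) :
    ((↑(ζ : ArithmeticFunction ℕ) * Faux) m : ℝ) = ∑ d ∈ m.divisors, f d * d := by
  rw [coe_zeta_mul_apply]
  apply Finset.sum_congr rfl
  intro d hd
  exact Faux_apply (Nat.pos_of_mem_divisors hd).ne'

open ArithmeticFunction ArithmeticFunction.zeta in
lemma zetaF_prime_pow {p : ℕ} (hp : p.Prime) (k : ℕ) :
    (↑(ζ : ArithmeticFunction ℕ) * Faux) (p ^ k) = hval p k := by
  rw [coe_zeta_mul_apply, Nat.sum_divisors_prime_pow hp]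
  rw [← sum_fd_prime_pow hp k]
  apply Finset.sum_congr rfl
  intro j hj
  rw [Faux_apply (pow_ne_zero j hp.ne_zero)]
  push_cast
  ring

open ArithmeticFunction ArithmeticFunction.zeta in
lemma sum_divisors_f_eq (m : ℕ) (hm : m ≠ 0) :
    ∑ d ∈ m.divisors, f d * d = J m * m := by
  have hmult : (↑(ζ : ArithmeticFunction ℕ) * Faux).IsMultiplicative :=
    (isMultiplicative_zeta.natCast).mul Faux_isMult
  have h1 : (↑(ζ : ArithmeticFunction ℕ) * Faux) m
      = m.factorization.prod fun p k => (↑(ζ : ArithmeticFunction ℕ) * Faux) (p ^ k) :=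
    hmult.multiplicative_factorization _ hm
  rw [← zetaF_apply m hm, h1, Nat.prod_factorization_eq_prod_primeFactors]
  have hcongr : ∏ p ∈ m.primeFactors,
        (↑(ζ : ArithmeticFunction ℕ) * Faux) (p ^ m.factorization p)
      = ∏ p ∈ m.primeFactors, hval p (m.factorization p) := by
    apply Finset.prod_congr rfl
    intro p hp
    exact zetaF_prime_pow (Nat.prime_of_mem_primeFactors hp) _
  rw [hcongr]
  set k2 := m.factorization 2 with hk2
  have hsplit := Finset.prod_filter_mul_prod_filter_not m.primeFactors (fun p => 2 < p)
      (fun p => hval p (m.factorization p))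
  rw [← hsplit]
  have hodd : ∏ p ∈ m.primeFactors.filter (fun p => 2 < p), hval p (m.factorization p)
      = (∏ p ∈ m.primeFactors.filter (fun p => 2 < p),
          (1 - 2 / (p : ℝ) ^ (m.factorization p + 1)) * (1 - 2 / (p : ℝ))⁻¹)
        * ∏ p ∈ m.primeFactors.filter (fun p => 2 < p), ((p:ℝ))^(m.factorization p) := by
    rw [← Finset.prod_mul_distrib]
    apply Finset.prod_congr rfl
    intro p hp
    have hp2 : 2 < p := (Finset.mem_filter.mp hp).2
    rw [hval, if_neg (by omega)]
  have heven : ∏ p ∈ m.primeFactors.filter (fun p => ¬ 2 < p), hval p (m.factorization p)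
      = ((2:ℝ) - 1/2^k2) * 2^k2 := by
    rcases Nat.even_or_odd m with he | ho
    · have h2m : 2 ∣ m := he.two_dvd
      have hfilt : m.primeFactors.filter (fun p => ¬ 2 < p) = {2} := by
        ext p
        simp only [Finset.mem_filter, Nat.mem_primeFactors, Finset.mem_singleton]
        constructor
        · rintro ⟨⟨hp, _, _⟩, h2⟩
          have := hp.two_le
          omega
        · rintro rfl
          exact ⟨⟨Nat.prime_two, h2m, hm⟩, by omega⟩
      rw [hfilt, Finset.prod_singleton, hval, if_pos rfl]
    · have h2m : ¬ 2 ∣ m := by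
        rw [Nat.two_dvd_ne_zero]
        exact Nat.odd_iff.mp ho
      have hfilt : m.primeFactors.filter (fun p => ¬ 2 < p) = ∅ := by
        ext p
        simp only [Finset.mem_filter, Nat.mem_primeFactors, Finset.notMem_empty, iff_false]
        rintro ⟨⟨hp, hpdvd, _⟩, h2⟩
        have := hp.two_le
        have : p = 2 := by omega
        exact h2m (this ▸ hpdvd)
      have hk20 : k2 = 0 := by
        rw [hk2, Nat.factorization_eq_zero_of_not_dvd h2m]
      rw [hfilt, Finset.prod_empty, hk20]
      norm_num
  have hm2 : (m:ℝ) = (∏ p ∈ m.primeFactors.filter (fun p => 2 < p),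
      ((p:ℝ))^(m.factorization p)) * 2^k2 := by
    have hbase : (m:ℝ) = ∏ p ∈ m.primeFactors, ((p:ℝ))^(m.factorization p) := by
      conv_lhs => rw [← Nat.factorization_prod_pow_eq_self hm]
      rw [Nat.prod_factorization_eq_prod_primeFactors]
      push_cast
      rfl
    rw [hbase, ← Finset.prod_filter_mul_prod_filter_not m.primeFactors (fun p => 2 < p)]
    congr 1
    rcases Nat.even_or_odd m with he | ho
    · have h2m : 2 ∣ m := he.two_dvd
      have hfilt : m.primeFactors.filter (fun p => ¬ 2 < p) = {2} := by
        ext p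
        simp only [Finset.mem_filter, Nat.mem_primeFactors, Finset.mem_singleton]
        constructor
        · rintro ⟨⟨hp, _, _⟩, h2⟩
          have := hp.two_le
          omega
        · rintro rfl
          exact ⟨⟨Nat.prime_two, h2m, hm⟩, by omega⟩
      rw [hfilt, Finset.prod_singleton]
      norm_num
      exact hk2.symm
    · have h2m : ¬ 2 ∣ m := by
        rw [Nat.two_dvd_ne_zero]
        exact Nat.odd_iff.mp ho
      have hfilt : m.primeFactors.filter (fun p => ¬ 2 < p) = ∅ := by
        ext p
        simp only [Finset.mem_filter, Nat.mem_primeFactors, Finset.notMem_empty, iff_false]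
        rintro ⟨⟨hp, hpdvd, _⟩, h2⟩
        have := hp.two_le
        have : p = 2 := by omega
        exact h2m (this ▸ hpdvd)
      have hk20 : k2 = 0 := by
        rw [hk2, Nat.factorization_eq_zero_of_not_dvd h2m]
      rw [hfilt, Finset.prod_empty, hk20]
      norm_num
  rw [hodd, heven, J, hm2, ← hk2]
  ring

/-! ### Divisor-count bound -/

lemma factor_bound_small (δ : ℝ) (hδ0 : 0 < δ) (hδ1 : δ ≤ 1) (p e : ℕ) (hp : 2 ≤ p) :
    ((e:ℝ) + 1) ≤ (2/δ) * (((p:ℝ)^e) ^ δ) := by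
  have h2e : ((2:ℝ)^e) ^ δ ≤ ((p:ℝ)^e) ^ δ := by
    apply Real.rpow_le_rpow (by positivity) _ hδ0.le
    apply pow_le_pow_left₀ (by norm_num)
    exact_mod_cast hp
  have hexp : ((2:ℝ)^e) ^ δ = Real.exp (δ * (e * Real.log 2)) := by
    rw [Real.rpow_def_of_pos (by positivity), Real.log_pow]
    push_cast
    ring_nf
  have hlin : 1 + δ * (e * Real.log 2) ≤ ((2:ℝ)^e) ^ δ := by
    rw [hexp]
    linarith [Real.add_one_le_exp (δ * (e * Real.log 2))]
  have hlog2 : (1:ℝ)/2 ≤ Real.log 2 := by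
    linarith [Real.log_two_gt_d9]
  have hd : (0:ℝ) < 2/δ := by positivity
  calc ((e:ℝ) + 1) ≤ (2/δ) * (1 + δ * (e * Real.log 2)) := by
        rw [mul_add, mul_one]
        have h1 : (2:ℝ)/δ ≥ 1 := by
          rw [ge_iff_le, le_div_iff₀ hδ0]; linarith
        have h2 : (2/δ) * (δ * (e * Real.log 2)) = 2 * Real.log 2 * e := by
          field_simp
        rw [h2]
        nlinarith [Nat.cast_nonneg (α := ℝ) e]
  _ ≤ (2/δ) * (((p:ℝ)^e) ^ δ) := by
        apply mul_le_mul_of_nonneg_left _ hd.le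
        exact le_trans hlin h2e

lemma factor_bound_large (δ : ℝ) (hδ0 : 0 < δ) (p e : ℕ)
    (hp : ((2:ℝ)^(1/δ) : ℝ) ≤ p) : ((e:ℝ) + 1) ≤ ((p:ℝ)^e) ^ δ := by
  have hp0 : (0:ℝ) < p := lt_of_lt_of_le (Real.rpow_pos_of_pos two_pos _) hp
  have hpδ : (2:ℝ) ≤ (p:ℝ) ^ δ := by
    calc (2:ℝ) = ((2:ℝ)^(1/δ))^δ := by
          rw [← Real.rpow_mul (by norm_num), one_div_mul_cancel hδ0.ne', Real.rpow_one]
    _ ≤ (p:ℝ) ^ δ := Real.rpow_le_rpow (Real.rpow_nonneg (by norm_num) _) hp hδ0.le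
  have key : ((p:ℝ)^e) ^ δ = ((p:ℝ) ^ δ) ^ e := by
    rw [← Real.rpow_natCast ((p:ℝ)^δ) e, ← Real.rpow_mul hp0.le, ← Real.rpow_natCast (p:ℝ) e,
      ← Real.rpow_mul hp0.le, mul_comm]
  rw [key]
  calc ((e:ℝ) + 1) ≤ (2:ℝ)^e := by
        have h := Nat.lt_two_pow_self (n := e)
        have h2 : (e:ℝ) + 1 ≤ ((2^e : ℕ) : ℝ) := by exact_mod_cast h
        simpa using h2
  _ ≤ ((p:ℝ) ^ δ) ^ e := pow_le_pow_left₀ (by norm_num) hpδ e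

lemma tau_le_rpow (δ : ℝ) (hδ0 : 0 < δ) (hδ1 : δ ≤ 1) :
    ∃ C : ℝ, 1 ≤ C ∧ ∀ m : ℕ, m ≠ 0 → (m.divisors.card : ℝ) ≤ C * (m:ℝ) ^ δ := by
  set N : ℕ := ⌈(2:ℝ)^(1/δ)⌉₊ with hN
  refine ⟨(2/δ)^N, one_le_pow₀ (by rw [le_div_iff₀ hδ0]; linarith), ?_⟩
  intro m hm
  have hcard : (m.divisors.card : ℝ) = ∏ p ∈ m.primeFactors, ((m.factorization p : ℝ) + 1) := by
    rw [Nat.card_divisors hm]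
    push_cast
    rfl
  have hmδ : (m:ℝ) ^ δ = ∏ p ∈ m.primeFactors, (((p:ℝ)^(m.factorization p)) ^ δ) := by
    have hbase : (m:ℝ) = ∏ p ∈ m.primeFactors, ((p:ℝ))^(m.factorization p) := by
      conv_lhs => rw [← Nat.factorization_prod_pow_eq_self hm]
      rw [Nat.prod_factorization_eq_prod_primeFactors]
      push_cast
      rfl
    rw [hbase, ← Real.finset_prod_rpow _ _ (fun p _ => by positivity) δ]
  have hstep : ∏ p ∈ m.primeFactors, ((m.factorization p : ℝ) + 1)
      ≤ ∏ p ∈ m.primeFactors,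
        ((if p < N then 2/δ else 1) * (((p:ℝ)^(m.factorization p)) ^ δ)) := by
    apply Finset.prod_le_prod
    · intro p _; positivity
    · intro p hp
      have hp2 : 2 ≤ p := (Nat.prime_of_mem_primeFactors hp).two_le
      by_cases hcase : p < N
      · rw [if_pos hcase]
        exact factor_bound_small δ hδ0 hδ1 p _ hp2
      · rw [if_neg hcase, one_mul]
        apply factor_bound_large δ hδ0 p _
        calc ((2:ℝ)^(1/δ) : ℝ) ≤ N := Nat.le_ceil _
        _ ≤ p := by exact_mod_cast Nat.le_of_not_lt hcase
  have hsplit : ∏ p ∈ m.primeFactors,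
        ((if p < N then 2/δ else 1) * (((p:ℝ)^(m.factorization p)) ^ δ))
      = (∏ p ∈ m.primeFactors, (if p < N then 2/δ else 1)) * (m:ℝ) ^ δ := by
    rw [Finset.prod_mul_distrib, hmδ]
  have hifprod : (∏ p ∈ m.primeFactors, (if p < N then (2:ℝ)/δ else 1)) ≤ (2/δ)^N := by
    rw [Finset.prod_ite, Finset.prod_const, Finset.prod_const, one_pow, mul_one]
    apply pow_le_pow_right₀ (by rw [le_div_iff₀ hδ0]; linarith)
    calc (m.primeFactors.filter (fun p => p < N)).card ≤ (Finset.range N).card := by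
          apply Finset.card_le_card
          intro p hp
          rw [Finset.mem_range]
          exact (Finset.mem_filter.mp hp).2
    _ = N := Finset.card_range N
  rw [hcard]
  calc ∏ p ∈ m.primeFactors, ((m.factorization p : ℝ) + 1)
      ≤ (∏ p ∈ m.primeFactors, (if p < N then (2:ℝ)/δ else 1)) * (m:ℝ) ^ δ := by
        rw [← hsplit]; exact hstep
  _ ≤ (2/δ)^N * (m:ℝ) ^ δ := by
        apply mul_le_mul_of_nonneg_right hifprod (Real.rpow_nonneg (Nat.cast_nonneg m) δ)

/-! ### Rewriting `a (2m)` -/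

lemma a_two_mul (m : ℕ) (hm : m ≠ 0) : a (2 * m) = ∑ t ∈ m.divisors, R (2 * t) := by
  rw [a, ← Finset.sum_filter_add_sum_filter_not ((2*m).divisors) (fun d => Even d)]
  have h2 : ∑ d ∈ (2*m).divisors.filter (fun d => ¬ Even d), R d = 0 := by
    apply Finset.sum_eq_zero
    intro d hd
    exact R_odd d (Finset.mem_filter.mp hd).2
  rw [h2, add_zero]
  symm
  apply Finset.sum_bij (fun t _ => 2 * t)
  · intro t ht
    rw [Finset.mem_filter, Nat.mem_divisors]
    rw [Nat.mem_divisors] at ht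
    exact ⟨⟨mul_dvd_mul_left 2 ht.1, by positivity⟩, even_two_mul t⟩
  · intro t1 h1 t2 h2 h
    omega
  · intro d hd
    rw [Finset.mem_filter, Nat.mem_divisors] at hd
    obtain ⟨⟨hdvd, h0⟩, he⟩ := hd
    obtain ⟨t, rfl⟩ := he.two_dvd
    refine ⟨t, ?_, rfl⟩
    rw [Nat.mem_divisors]
    exact ⟨(mul_dvd_mul_iff_left (two_ne_zero)).mp hdvd, hm⟩
  · intro t ht
    rfl

/-! ### Main theorem -/

set_option maxHeartbeats 1000000 in
theorem a_bounds_of_epsilon_HL (ε : ℝ) (hε0 : 0 < ε) (hε : ε ≤ 1 / 2)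
    (nε : ℕ) (hnε : 0 < nε)
    (hHL : ∀ n : ℕ, nε < n →
      (1 - ε) * (2 * C₂) * f n * n / Real.log n ^ 2 ≤ (R (2 * n) : ℝ) ∧
      (R (2 * n) : ℝ) ≤ (1 + ε) * (2 * C₂) * f n * n / Real.log n ^ 2) :
    ∃ mε : ℕ, ∀ m : ℕ, mε < m →
      (1 - 2 * ε) * (2 * C₂) * J m * m / Real.log m ^ 2 ≤ (a (2 * m) : ℝ) ∧
      (a (2 * m) : ℝ) ≤ (1 + 11 * ε) * (2 * C₂) * J m * m / Real.log m ^ 2 := by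
  classical
  -- Step 1: C₂ is positive.
  have hC2 : 0 < C₂ := by
    obtain ⟨p, hple, hp⟩ := Nat.exists_infinite_primes (nε + 3)
    have hp2 : p ≠ 2 := by omega
    have hodd : Odd p := hp.odd_of_ne_two hp2
    have h1 : 1 ≤ R (2 * p) := R_one_le p hp hodd
    have hub := (hHL p (by omega)).2
    by_contra hcon
    push_neg at hcon
    have hfp : 0 < f p := lt_of_lt_of_le zero_lt_one (one_le_f p)
    have hppos : (0:ℝ) < p := by
      have : 0 < p := by omega
      exact_mod_cast this
    have hnum : (1 + ε) * (2 * C₂) * f p * p ≤ 0 := by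
      have h2c : 2 * C₂ ≤ 0 := by linarith
      have hA : 0 < (1 + ε) * f p * (p:ℝ) := by
        apply mul_pos (mul_pos (by linarith) hfp) hppos
      nlinarith
    have hle : (1 + ε) * (2 * C₂) * f p * p / Real.log p ^ 2 ≤ 0 :=
      div_nonpos_of_nonpos_of_nonneg hnum (sq_nonneg _)
    have h1' : (1:ℝ) ≤ (R (2*p) : ℝ) := by exact_mod_cast h1
    linarith
  have hK : 0 < 2 * C₂ := by linarith
  set δ : ℝ := ε / 4 with hδdef
  have hδ0 : 0 < δ := by positivity
  have hδ1 : δ ≤ 1/8 := by rw [hδdef]; linarith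
  clear_value δ
  obtain ⟨C, hC1, hC⟩ := tau_le_rpow (δ/2) (by linarith) (by linarith)
  -- Step 2: eventual conditions.
  have hev : ∀ᶠ x : ℝ in Filter.atTop,
      3 ≤ x ∧ ((nε:ℝ) + 1) ≤ x ^ (1 - δ) ∧ 2*C*(Real.log x)^2 ≤ ε*(2*C₂)*x^(δ/2)
        ∧ C ≤ ε * x^(δ/2) := by
    have e1 : ∀ᶠ x : ℝ in Filter.atTop, (3:ℝ) ≤ x := Filter.eventually_ge_atTop 3
    have e2 : ∀ᶠ x : ℝ in Filter.atTop, ((nε:ℝ) + 1) ≤ x ^ (1 - δ) :=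
      (tendsto_rpow_atTop (by linarith)).eventually_ge_atTop _
    have e4 : ∀ᶠ x : ℝ in Filter.atTop, C ≤ ε * x^(δ/2) := by
      have h := (tendsto_rpow_atTop (show 0 < δ/2 by linarith)).eventually_ge_atTop (C / ε)
      filter_upwards [h] with x hx
      rw [div_le_iff₀ hε0] at hx
      linarith
    have e3 : ∀ᶠ x : ℝ in Filter.atTop, 2*C*(Real.log x)^2 ≤ ε*(2*C₂)*x^(δ/2) := by
      have hlog : ∀ᶠ x : ℝ in Filter.atTop, Real.log x ≤ x ^ (δ/8) := by
        have hb := (isLittleO_log_rpow_atTop (show 0 < δ/8 by linarith)).bound one_pos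
        filter_upwards [hb, Filter.eventually_ge_atTop (1:ℝ)] with x hx hx1
        rw [one_mul, Real.norm_eq_abs, Real.norm_eq_abs] at hx
        calc Real.log x ≤ |Real.log x| := le_abs_self _
        _ ≤ |x ^ (δ/8)| := hx
        _ = x ^ (δ/8) := abs_of_nonneg (Real.rpow_nonneg (by linarith) _)
      have hbig := (tendsto_rpow_atTop (show 0 < δ/4 by linarith)).eventually_ge_atTop
        (2*C/(ε*(2*C₂)))
      filter_upwards [hlog, hbig, Filter.eventually_ge_atTop (1:ℝ)] with x hx hx2 hx1
      have hx0 : (0:ℝ) < x := by linarith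
      have hlog0 : 0 ≤ Real.log x := Real.log_nonneg hx1
      have hsq : (Real.log x)^2 ≤ x^(δ/4) := by
        calc (Real.log x)^2 ≤ (x^(δ/8))^2 := by
              apply pow_le_pow_left₀ hlog0 hx
        _ = x^(δ/4) := by
              rw [← Real.rpow_natCast (x^(δ/8)) 2, ← Real.rpow_mul hx0.le]
              rw [show (δ/8) * ((2:ℕ):ℝ) = δ/4 by push_cast; ring]
      have h24 : 2*C ≤ ε*(2*C₂)*x^(δ/4) := by
        rw [div_le_iff₀ (by positivity)] at hx2
        linarith
      have hxp : (0:ℝ) ≤ x^(δ/4) := Real.rpow_nonneg hx0.le _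
      calc 2*C*(Real.log x)^2 ≤ (ε*(2*C₂)*x^(δ/4)) * x^(δ/4) := by
            nlinarith
      _ = ε*(2*C₂)*x^(δ/2) := by
            rw [mul_assoc, ← Real.rpow_add hx0]
            rw [show δ/4 + δ/4 = δ/2 by ring]
    filter_upwards [e1, e2, e3, e4] with x h1 h2 h3 h4
    exact ⟨h1, h2, h3, h4⟩
  have hevN : ∀ᶠ m : ℕ in Filter.atTop,
      3 ≤ ((m:ℕ):ℝ) ∧ ((nε:ℝ) + 1) ≤ ((m:ℕ):ℝ) ^ (1 - δ)
        ∧ 2*C*(Real.log ((m:ℕ):ℝ))^2 ≤ ε*(2*C₂)*((m:ℕ):ℝ)^(δ/2)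
        ∧ C ≤ ε * ((m:ℕ):ℝ)^(δ/2) :=
    (tendsto_natCast_atTop_atTop (R := ℝ)).eventually hev
  obtain ⟨mε, hmε⟩ := Filter.eventually_atTop.mp hevN
  refine ⟨mε, fun m hm => ?_⟩
  obtain ⟨hx3, hxnε, hx_e3, hx_e4⟩ := hmε m (le_of_lt hm)
  -- Setup
  have hm3 : 3 ≤ m := by exact_mod_cast hx3
  have hm0 : m ≠ 0 := by omega
  have hx0 : (0:ℝ) < (m:ℝ) := by
    have : 0 < m := by omega
    exact_mod_cast this
  have hx1 : (1:ℝ) < (m:ℝ) := by linarith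
  have hlogx : 0 < Real.log (m:ℝ) := Real.log_pos hx1
  have hlogsq : 0 < Real.log (m:ℝ) ^ 2 := by positivity
  set T : ℝ := (m:ℝ) ^ (1 - δ) with hTdef
  have hT0 : 0 < T := Real.rpow_pos_of_pos hx0 _
  have hnε1 : (2:ℝ) ≤ (nε:ℝ) + 1 := by
    have : (1:ℝ) ≤ (nε:ℝ) := by exact_mod_cast hnε
    linarith
  have hT2 : (2:ℝ) ≤ T := le_trans hnε1 hxnε
  set Dbig : Finset ℕ := m.divisors.filter (fun d : ℕ => T < (d:ℝ)) with hDbigdef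
  set Dsmall : Finset ℕ := m.divisors.filter (fun d : ℕ => ¬ T < (d:ℝ)) with hDsmalldef
  -- facts about big divisors
  have hbig_facts : ∀ d ∈ Dbig, d ∣ m ∧ nε < d ∧ (1:ℝ) < (d:ℝ) ∧ (d:ℝ) ≤ (m:ℝ) := by
    intro d hd
    rw [hDbigdef, Finset.mem_filter, Nat.mem_divisors] at hd
    obtain ⟨⟨hdvd, -⟩, hTd⟩ := hd
    have hd1 : (1:ℝ) < (d:ℝ) := by linarith
    have hdm : d ≤ m := Nat.le_of_dvd (by omega) hdvd
    have hnltd : nε < d := by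
      have : ((nε:ℝ)) + 1 ≤ (d:ℝ) := by linarith [hxnε]
      have : (nε:ℝ) < (d:ℝ) := by linarith
      exact_mod_cast this
    exact ⟨hdvd, hnltd, hd1, by exact_mod_cast hdm⟩
  -- the f-sum identity and split
  have hid : ∑ d ∈ m.divisors, f d * (d:ℝ) = J m * (m:ℝ) := sum_divisors_f_eq m hm0
  have hsplitf : ∑ d ∈ Dbig, f d * (d:ℝ) + ∑ d ∈ Dsmall, f d * (d:ℝ) = J m * (m:ℝ) := by
    rw [hDbigdef, hDsmalldef, Finset.sum_filter_add_sum_filter_not, hid]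
  -- the small f-sum bound
  have hcard_small : (Dsmall.card : ℝ) ≤ C * (m:ℝ)^(δ/2) := by
    calc (Dsmall.card : ℝ) ≤ (m.divisors.card : ℝ) := by
          exact_mod_cast Finset.card_le_card (Finset.filter_subset _ _)
    _ ≤ C * (m:ℝ)^(δ/2) := hC m hm0
  have hsmall_term : ∀ d ∈ Dsmall, f d * (d:ℝ) ≤ J m * T := by
    intro d hd
    rw [hDsmalldef, Finset.mem_filter, Nat.mem_divisors] at hd
    obtain ⟨⟨hdvd, -⟩, hTd⟩ := hd
    push_neg at hTd
    have hfd : f d ≤ J m := le_trans (f_dvd_le hdvd hm0) (f_le_J m)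
    have hd0 : (0:ℝ) ≤ (d:ℝ) := Nat.cast_nonneg d
    exact mul_le_mul hfd hTd hd0 (J_nonneg m)
  have hpows : (m:ℝ)^(δ/2) * ((m:ℝ)^(δ/2) * T) = (m:ℝ) := by
    rw [hTdef, ← Real.rpow_add hx0, ← Real.rpow_add hx0]
    rw [show δ/2 + (δ/2 + (1 - δ)) = 1 by ring, Real.rpow_one]
  have hsmallf : ∑ d ∈ Dsmall, f d * (d:ℝ) ≤ ε * (J m * (m:ℝ)) := by
    have h1 : ∑ d ∈ Dsmall, f d * (d:ℝ) ≤ (Dsmall.card : ℝ) * (J m * T) := by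
      calc ∑ d ∈ Dsmall, f d * (d:ℝ) ≤ ∑ _d ∈ Dsmall, J m * T :=
            Finset.sum_le_sum hsmall_term
      _ = (Dsmall.card : ℝ) * (J m * T) := by
            rw [Finset.sum_const, nsmul_eq_mul]
    have h2 : (Dsmall.card : ℝ) * (J m * T) ≤ (C * (m:ℝ)^(δ/2)) * (J m * T) := by
      apply mul_le_mul_of_nonneg_right hcard_small
      exact mul_nonneg (J_nonneg m) hT0.le
    have h3 : (C * (m:ℝ)^(δ/2)) * (J m * T) ≤ (ε * (m:ℝ)^(δ/2) * (m:ℝ)^(δ/2)) * (J m * T) := by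
      apply mul_le_mul_of_nonneg_right _ (mul_nonneg (J_nonneg m) hT0.le)
      have hp : (0:ℝ) ≤ (m:ℝ)^(δ/2) := Real.rpow_nonneg hx0.le _
      nlinarith [hx_e4]
    have h4 : (ε * (m:ℝ)^(δ/2) * (m:ℝ)^(δ/2)) * (J m * T) = ε * (J m * (m:ℝ)) := by
      linear_combination (ε * J m) * hpows
    linarith
  have hbigf_low : (1 - ε) * (J m * (m:ℝ)) ≤ ∑ d ∈ Dbig, f d * (d:ℝ) := by
    have hexp : (1 - ε) * (J m * (m:ℝ)) = J m * (m:ℝ) - ε * (J m * (m:ℝ)) := by ring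
    rw [hexp]
    linarith [hsmallf, hsplitf]
  have hbigf_up : ∑ d ∈ Dbig, f d * (d:ℝ) ≤ J m * (m:ℝ) := by
    have : 0 ≤ ∑ d ∈ Dsmall, f d * (d:ℝ) :=
      Finset.sum_nonneg fun d _ => mul_nonneg (f_nonneg d) (Nat.cast_nonneg d)
    linarith
  -- the R-sum
  have h_a_eq : (a (2*m) : ℝ) = ∑ d ∈ m.divisors, (R (2*d) : ℝ) := by
    rw [a_two_mul m hm0]
    push_cast
    rfl
  have h_a_split : (a (2*m) : ℝ) = ∑ d ∈ Dbig, (R (2*d) : ℝ) + ∑ d ∈ Dsmall, (R (2*d) : ℝ) := by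
    rw [h_a_eq, hDbigdef, hDsmalldef, Finset.sum_filter_add_sum_filter_not]
  -- LOWER BOUND
  have h_perterm_low : ∀ d ∈ Dbig,
      (1 - ε) * (2 * C₂) * f d * (d:ℝ) / Real.log (m:ℝ) ^ 2 ≤ (R (2*d) : ℝ) := by
    intro d hd
    obtain ⟨hdvd, hnd, hd1, hdm⟩ := hbig_facts d hd
    have hlogd : 0 < Real.log (d:ℝ) := Real.log_pos hd1
    have hlogdm : Real.log (d:ℝ) ≤ Real.log (m:ℝ) := Real.log_le_log (show (0:ℝ) < (d:ℝ) by linarith) hdm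
    have hsq : Real.log (d:ℝ) ^ 2 ≤ Real.log (m:ℝ) ^ 2 :=
      pow_le_pow_left₀ hlogd.le hlogdm 2
    have hnum : 0 ≤ (1 - ε) * (2 * C₂) * f d * (d:ℝ) :=
      mul_nonneg (mul_nonneg (mul_nonneg (by linarith) hK.le) (f_nonneg d)) (Nat.cast_nonneg d)
    calc (1 - ε) * (2 * C₂) * f d * (d:ℝ) / Real.log (m:ℝ) ^ 2
        ≤ (1 - ε) * (2 * C₂) * f d * (d:ℝ) / Real.log (d:ℝ) ^ 2 :=
          div_le_div_of_nonneg_left hnum (pow_pos hlogd 2) hsq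
    _ ≤ (R (2*d) : ℝ) := (hHL d hnd).1
  have h_low_sum : (1 - ε) * (2 * C₂) * (∑ d ∈ Dbig, f d * (d:ℝ)) / Real.log (m:ℝ) ^ 2
      ≤ ∑ d ∈ Dbig, (R (2*d) : ℝ) := by
    have heq : (1 - ε) * (2 * C₂) * (∑ d ∈ Dbig, f d * (d:ℝ)) / Real.log (m:ℝ) ^ 2
        = ∑ d ∈ Dbig, (1 - ε) * (2 * C₂) * f d * (d:ℝ) / Real.log (m:ℝ) ^ 2 := by
      rw [Finset.mul_sum, Finset.sum_div]
      apply Finset.sum_congr rfl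
      intro d _
      ring
    rw [heq]
    exact Finset.sum_le_sum h_perterm_low
  have h_Rsmall_nonneg : 0 ≤ ∑ d ∈ Dsmall, (R (2*d) : ℝ) :=
    Finset.sum_nonneg fun d _ => Nat.cast_nonneg _
  have hlower : (1 - 2*ε) * (2*C₂) * J m * (m:ℝ) / Real.log (m:ℝ) ^ 2 ≤ (a (2*m) : ℝ) := by
    have hnum : (1 - 2*ε) * (2*C₂) * J m * (m:ℝ)
        ≤ (1 - ε) * (2 * C₂) * ((1 - ε) * (J m * (m:ℝ))) := by
      have hX : 0 ≤ (2*C₂) * (J m * (m:ℝ)) :=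
        mul_nonneg hK.le (mul_nonneg (J_nonneg m) hx0.le)
      nlinarith [mul_nonneg (sq_nonneg ε) hX]
    have hnum2 : (1 - ε) * (2 * C₂) * ((1 - ε) * (J m * (m:ℝ)))
        ≤ (1 - ε) * (2 * C₂) * (∑ d ∈ Dbig, f d * (d:ℝ)) := by
      apply mul_le_mul_of_nonneg_left hbigf_low
      nlinarith [hK]
    have h5 : (1 - 2*ε) * (2*C₂) * J m * (m:ℝ) / Real.log (m:ℝ) ^ 2
        ≤ (1 - ε) * (2 * C₂) * (∑ d ∈ Dbig, f d * (d:ℝ)) / Real.log (m:ℝ) ^ 2 :=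
      (div_le_div_iff_of_pos_right hlogsq).mpr (hnum.trans hnum2)
    have h6 := h5.trans h_low_sum
    rw [h_a_split]
    linarith
  -- UPPER BOUND
  have hδlt1 : δ < 1 := by linarith
  have h_perterm_up : ∀ d ∈ Dbig, (R (2*d) : ℝ)
      ≤ (1 + ε) * (2 * C₂) * f d * (d:ℝ) / ((1-δ)^2 * Real.log (m:ℝ) ^ 2) := by
    intro d hd
    obtain ⟨hdvd, hnd, hd1, hdm⟩ := hbig_facts d hd
    have hTd : T < (d:ℝ) := by
      rw [hDbigdef, Finset.mem_filter] at hd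
      exact hd.2
    have hlogd : 0 < Real.log (d:ℝ) := Real.log_pos hd1
    have hlogT : Real.log T = (1-δ) * Real.log (m:ℝ) := Real.log_rpow hx0 _
    have hlogd_ge : (1-δ) * Real.log (m:ℝ) ≤ Real.log (d:ℝ) := by
      rw [← hlogT]
      exact Real.log_le_log hT0 hTd.le
    have hsq : (1-δ)^2 * Real.log (m:ℝ) ^ 2 ≤ Real.log (d:ℝ) ^ 2 := by
      have h1 : ((1-δ) * Real.log (m:ℝ))^2 ≤ Real.log (d:ℝ) ^ 2 :=
        pow_le_pow_left₀ (mul_nonneg (by linarith) hlogx.le) hlogd_ge 2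
      calc (1-δ)^2 * Real.log (m:ℝ) ^ 2 = ((1-δ) * Real.log (m:ℝ))^2 := by ring
      _ ≤ Real.log (d:ℝ) ^ 2 := h1
    have hnum : 0 ≤ (1 + ε) * (2 * C₂) * f d * (d:ℝ) :=
      mul_nonneg (mul_nonneg (mul_nonneg (by linarith) hK.le) (f_nonneg d)) (Nat.cast_nonneg d)
    calc (R (2*d) : ℝ) ≤ (1 + ε) * (2 * C₂) * f d * (d:ℝ) / Real.log (d:ℝ) ^ 2 :=
          (hHL d hnd).2
    _ ≤ (1 + ε) * (2 * C₂) * f d * (d:ℝ) / ((1-δ)^2 * Real.log (m:ℝ) ^ 2) :=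
          div_le_div_of_nonneg_left hnum
            (mul_pos (pow_pos (show (0:ℝ) < 1-δ by linarith) 2) hlogsq) hsq
  have h_up_big : ∑ d ∈ Dbig, (R (2*d) : ℝ)
      ≤ (1 + ε) * (2 * C₂) * (J m * (m:ℝ)) / ((1-δ)^2 * Real.log (m:ℝ) ^ 2) := by
    have h1 : ∑ d ∈ Dbig, (R (2*d) : ℝ)
        ≤ (1 + ε) * (2 * C₂) * (∑ d ∈ Dbig, f d * (d:ℝ)) / ((1-δ)^2 * Real.log (m:ℝ) ^ 2) := by
      have heq : (1 + ε) * (2 * C₂) * (∑ d ∈ Dbig, f d * (d:ℝ))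
            / ((1-δ)^2 * Real.log (m:ℝ) ^ 2)
          = ∑ d ∈ Dbig, (1 + ε) * (2 * C₂) * f d * (d:ℝ)
            / ((1-δ)^2 * Real.log (m:ℝ) ^ 2) := by
        rw [Finset.mul_sum, Finset.sum_div]
        apply Finset.sum_congr rfl
        intro d _
        ring
      rw [heq]
      exact Finset.sum_le_sum h_perterm_up
    refine h1.trans ?_
    apply (div_le_div_iff_of_pos_right (mul_pos (pow_pos (show (0:ℝ) < 1-δ by linarith) 2) hlogsq)).mpr
    apply mul_le_mul_of_nonneg_left hbigf_up
    nlinarith [hK]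
  have hfrac : (1 + ε) * (2 * C₂) * (J m * (m:ℝ)) / ((1-δ)^2 * Real.log (m:ℝ) ^ 2)
      ≤ (1 + 2*ε) * (2 * C₂) * (J m * (m:ℝ)) / Real.log (m:ℝ) ^ 2 := by
    rw [div_le_div_iff₀ (mul_pos (pow_pos (show (0:ℝ) < 1-δ by linarith) 2) hlogsq) hlogsq]
    have hcoeff : (1+ε) ≤ (1+2*ε)*(1-δ)^2 := by
      rw [hδdef]
      nlinarith [hε0, hε, sq_nonneg ε, sq_nonneg (ε - 1/2)]
    have hB : 0 ≤ (2*C₂) * (J m * (m:ℝ)) * Real.log (m:ℝ) ^ 2 :=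
      mul_nonneg (mul_nonneg hK.le (mul_nonneg (J_nonneg m) hx0.le)) hlogsq.le
    have hmul := mul_le_mul_of_nonneg_right hcoeff hB
    calc (1 + ε) * (2 * C₂) * (J m * (m:ℝ)) * Real.log (m:ℝ) ^ 2
        = (1+ε) * ((2*C₂) * (J m * (m:ℝ)) * Real.log (m:ℝ) ^ 2) := by ring
    _ ≤ ((1+2*ε)*(1-δ)^2) * ((2*C₂) * (J m * (m:ℝ)) * Real.log (m:ℝ) ^ 2) := hmul
    _ = (1 + 2*ε) * (2 * C₂) * (J m * (m:ℝ)) * ((1-δ)^2 * Real.log (m:ℝ) ^ 2) := by ring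
  have h_up_small : ∑ d ∈ Dsmall, (R (2*d) : ℝ)
      ≤ ε * (2 * C₂) * (J m * (m:ℝ)) / Real.log (m:ℝ) ^ 2 := by
    have hterm : ∀ d ∈ Dsmall, (R (2*d) : ℝ) ≤ 2 * T := by
      intro d hd
      rw [hDsmalldef, Finset.mem_filter] at hd
      obtain ⟨-, hTd⟩ := hd
      push_neg at hTd
      calc (R (2*d) : ℝ) ≤ ((2*d : ℕ) : ℝ) := by exact_mod_cast R_le (2*d)
      _ = 2 * (d:ℝ) := by push_cast; ring
      _ ≤ 2 * T := by linarith
    have h1 : ∑ d ∈ Dsmall, (R (2*d) : ℝ) ≤ (Dsmall.card : ℝ) * (2*T) := by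
      calc ∑ d ∈ Dsmall, (R (2*d) : ℝ) ≤ ∑ _d ∈ Dsmall, 2*T := Finset.sum_le_sum hterm
      _ = (Dsmall.card : ℝ) * (2*T) := by rw [Finset.sum_const, nsmul_eq_mul]
    have h2 : (Dsmall.card : ℝ) * (2*T) ≤ (C * (m:ℝ)^(δ/2)) * (2*T) :=
      mul_le_mul_of_nonneg_right hcard_small (by linarith)
    have h3 : (C * (m:ℝ)^(δ/2)) * (2*T) ≤ ε * (2 * C₂) * (m:ℝ) / Real.log (m:ℝ) ^ 2 := by
      rw [le_div_iff₀ hlogsq]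
      have hmono := mul_le_mul_of_nonneg_right hx_e3
        (mul_nonneg (Real.rpow_nonneg hx0.le (δ/2)) hT0.le)
      calc C * (m:ℝ)^(δ/2) * (2*T) * Real.log (m:ℝ) ^ 2
          = (2*C*Real.log (m:ℝ) ^ 2) * ((m:ℝ)^(δ/2) * T) := by ring
      _ ≤ (ε*(2*C₂)*(m:ℝ)^(δ/2)) * ((m:ℝ)^(δ/2) * T) := hmono
      _ = ε * (2 * C₂) * (m:ℝ) := by linear_combination (ε*(2*C₂)) * hpows
    have h4 : ε * (2 * C₂) * (m:ℝ) / Real.log (m:ℝ) ^ 2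
        ≤ ε * (2 * C₂) * (J m * (m:ℝ)) / Real.log (m:ℝ) ^ 2 := by
      apply (div_le_div_iff_of_pos_right hlogsq).mpr
      have hA : 0 ≤ ε*(2*C₂)*(m:ℝ) := mul_nonneg (mul_nonneg hε0.le hK.le) hx0.le
      calc ε*(2*C₂)*(m:ℝ) ≤ ε*(2*C₂)*(m:ℝ) * J m := le_mul_of_one_le_right hA (one_le_J m)
      _ = ε*(2*C₂)*(J m*(m:ℝ)) := by ring
    linarith
  have hupper : (a (2*m) : ℝ) ≤ (1 + 11*ε) * (2*C₂) * J m * (m:ℝ) / Real.log (m:ℝ) ^ 2 := by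
    have hsum : (a (2*m) : ℝ)
        ≤ (1 + ε) * (2 * C₂) * (J m * (m:ℝ)) / ((1-δ)^2 * Real.log (m:ℝ) ^ 2)
          + ε * (2 * C₂) * (J m * (m:ℝ)) / Real.log (m:ℝ) ^ 2 := by
      rw [h_a_split]
      linarith
    have hstep : (1 + 2*ε) * (2 * C₂) * (J m * (m:ℝ)) / Real.log (m:ℝ) ^ 2
          + ε * (2 * C₂) * (J m * (m:ℝ)) / Real.log (m:ℝ) ^ 2
        ≤ (1 + 11*ε) * (2*C₂) * J m * (m:ℝ) / Real.log (m:ℝ) ^ 2 := by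
      rw [← add_div]
      apply (div_le_div_iff_of_pos_right hlogsq).mpr
      nlinarith [mul_nonneg (mul_nonneg hK.le (J_nonneg m)) hx0.le]
    linarith
  exact ⟨hlower, hupper⟩
end

section
/- For every positive integer N, the Nth cyclotomic polynomial Φ_N(z) divides F_N(z) in ℤ[z] if and only if N has no representation as a sum of two odd primes (i.e., R(N) = 0). -/
open Polynomial Finset

private lemma cyc_dvd_of_dvd {N m : ℕ} (h : N ∣ m) :
    cyclotomic N ℤ ∣ (∑ k ∈ Finset.range N, (X : ℤ[X]) ^ (k * m)) - (N : ℤ[X]) := by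
  have h1 : ((N : ℤ[X])) = ∑ _k ∈ Finset.range N, (1 : ℤ[X]) := by simp
  rw [h1, ← Finset.sum_sub_distrib]
  refine Finset.dvd_sum fun k _ => ?_
  refine (cyclotomic.dvd_X_pow_sub_one N ℤ).trans ?_
  obtain ⟨j, rfl⟩ := h
  have h2 := sub_dvd_pow_sub_pow ((X : ℤ[X]) ^ N) 1 (k * j)
  simpa [← pow_mul, mul_comm, mul_assoc, mul_left_comm] using h2

private lemma not_cyc_dvd {N m : ℕ} (hN : 0 < N) (h : ¬ N ∣ m) :
    ¬ cyclotomic N ℤ ∣ ((X : ℤ[X]) ^ m - 1) := by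
  intro hdvd
  obtain ⟨g, hg⟩ := hdvd
  have hζ := Complex.isPrimitiveRoot_exp N hN.ne'
  set ζ := Complex.exp (2 * Real.pi * Complex.I / N)
  have hroot : (Polynomial.aeval ζ) (cyclotomic N ℤ) = 0 := by
    rw [Polynomial.aeval_def, Polynomial.eval₂_eq_eval_map, Polynomial.map_cyclotomic]
    exact hζ.isRoot_cyclotomic hN
  have := congrArg (Polynomial.aeval ζ) hg
  simp only [map_sub, map_pow, map_one, Polynomial.aeval_X, map_mul, hroot, zero_mul] at this
  exact h ((hζ.pow_eq_one_iff_dvd m).mp (by linear_combination this))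

private lemma cyc_dvd_of_not_dvd {N m : ℕ} (hN : 0 < N) (h : ¬ N ∣ m) :
    cyclotomic N ℤ ∣ (∑ k ∈ Finset.range N, (X : ℤ[X]) ^ (k * m)) := by
  have hprime : Prime (cyclotomic N ℤ) := (cyclotomic.irreducible hN).prime
  have hgeom : (∑ k ∈ Finset.range N, (X : ℤ[X]) ^ (k * m)) * ((X : ℤ[X]) ^ m - 1)
      = (X : ℤ[X]) ^ (N * m) - 1 := by
    have h2 := geom_sum_mul ((X : ℤ[X]) ^ m) N
    simpa [← pow_mul, mul_comm] using h2
  have hdvd : cyclotomic N ℤ ∣ (∑ k ∈ Finset.range N, (X : ℤ[X]) ^ (k * m)) * ((X : ℤ[X]) ^ m - 1) := by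
    rw [hgeom]
    refine (cyclotomic.dvd_X_pow_sub_one N ℤ).trans ?_
    have h2 := sub_dvd_pow_sub_pow ((X : ℤ[X]) ^ N) 1 m
    simpa [← pow_mul] using h2
  exact (hprime.dvd_mul.mp hdvd).resolve_right (not_cyc_dvd hN h)

/-- `F N = ∑_{k=0}^{N-1} ( ∑_{n=1}^{N-1} χ_P(n) z^{kn} )²`, where `χ_P` is the
indicator function of the odd primes. -/
noncomputable def F (N : ℕ) : Polynomial ℤ :=
  ∑ k ∈ Finset.range N,
    (∑ n ∈ Finset.range N,
      if n.Prime ∧ Odd n then (Polynomial.X : Polynomial ℤ) ^ (k * n) else 0) ^ 2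

theorem cyclotomic_dvd_F_iff (N : ℕ) (hN : 0 < N) :
    Polynomial.cyclotomic N ℤ ∣ F N ↔ R N = 0 := by
  classical
  set s := (Finset.range N).filter (fun n => n.Prime ∧ Odd n) with hs
  have hmem : ∀ p ∈ s, p < N ∧ 2 ≤ p := by
    intro p hp
    rw [hs, Finset.mem_filter, Finset.mem_range] at hp
    exact ⟨hp.1, hp.2.1.two_le⟩
  -- rewrite F as a sum over pairs
  have hF : F N = ∑ pq ∈ s ×ˢ s, ∑ k ∈ Finset.range N, (X : ℤ[X]) ^ (k * (pq.1 + pq.2)) := by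
    unfold F
    have h1 : ∀ k, (∑ n ∈ Finset.range N, if n.Prime ∧ Odd n then (X : ℤ[X]) ^ (k * n) else 0)
        = ∑ n ∈ s, (X : ℤ[X]) ^ (k * n) := fun k => (Finset.sum_filter _ _).symm
    simp_rw [h1, sq, Finset.sum_mul_sum, ← pow_add, ← Nat.mul_add]
    rw [Finset.sum_product, Finset.sum_comm]
    exact Finset.sum_congr rfl fun p _ => Finset.sum_comm
  set c := ((s ×ˢ s).filter fun pq => pq.1 + pq.2 = N).card with hc
  -- the constant term
  have hT : (∑ pq ∈ s ×ˢ s, if pq.1 + pq.2 = N then ((N : ℤ[X])) else 0)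
      = ((c * N : ℕ) : ℤ[X]) := by
    rw [← Finset.sum_filter, Finset.sum_const, ← hc]
    push_cast
    rw [nsmul_eq_mul]
  -- divisibility of the difference
  have hdiff : cyclotomic N ℤ ∣ F N - ((c * N : ℕ) : ℤ[X]) := by
    rw [hF, ← hT, ← Finset.sum_sub_distrib]
    refine Finset.dvd_sum fun pq hpq => ?_
    rw [Finset.mem_product] at hpq
    obtain ⟨h1, h2⟩ := hmem _ hpq.1
    obtain ⟨h3, h4⟩ := hmem _ hpq.2
    by_cases h : pq.1 + pq.2 = N
    · rw [if_pos h]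
      exact h ▸ cyc_dvd_of_dvd dvd_rfl
    · rw [if_neg h, sub_zero]
      refine cyc_dvd_of_not_dvd hN fun hdvd => h ?_
      obtain ⟨t, ht⟩ := hdvd
      have ht2 : t < 2 := by
        by_contra h5
        push_neg at h5
        have : N * 2 ≤ N * t := Nat.mul_le_mul_left N h5
        omega
      interval_cases t <;> omega
  have hkey : cyclotomic N ℤ ∣ F N ↔ cyclotomic N ℤ ∣ ((c * N : ℕ) : ℤ[X]) := by
    constructor
    · intro h; simpa using dvd_sub h hdiff
    · intro h
      have := dvd_add hdiff h
      simpa using this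
  -- identify R N with c
  have hR : R N = c := by
    have hset : {pq : ℕ × ℕ | pq.1.Prime ∧ Odd pq.1 ∧ pq.2.Prime ∧ Odd pq.2 ∧ pq.1 + pq.2 = N}
        = ↑((s ×ˢ s).filter fun pq => pq.1 + pq.2 = N) := by
      ext pq
      simp only [Finset.coe_filter, Finset.mem_product, Set.mem_setOf_eq, hs,
        Finset.mem_filter, Finset.mem_range]
      constructor
      · rintro ⟨hp, hop, hq, hoq, hsum⟩
        exact ⟨⟨⟨by have := hq.two_le; omega, hp, hop⟩,
          by have := hp.two_le; omega, hq, hoq⟩, hsum⟩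
      · rintro ⟨⟨⟨_, hp, hop⟩, _, hq, hoq⟩, hsum⟩
        exact ⟨hp, hop, hq, hoq, hsum⟩
    rw [R, hset, Set.ncard_coe_finset, hc]
  rw [hkey, hR]
  constructor
  · intro h
    by_contra hc0
    have hne : ((c * N : ℕ) : ℤ[X]) ≠ 0 := by
      rw [Nat.cast_ne_zero]
      positivity
    have := Polynomial.natDegree_le_of_dvd h hne
    rw [Polynomial.natDegree_natCast, Polynomial.natDegree_cyclotomic] at this
    have := Nat.totient_pos.mpr hN
    omega
  · intro h
    rw [h]
    simp
end

section
/- For every positive integer N, the cyclotomic polynomial Φ_{4N}(z) divides F_{2N}(z) in ℤ[z]. -/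
theorem cyclotomic_four_mul_dvd_F_two_mul (N : ℕ) (hN : 0 < N) :
    Polynomial.cyclotomic (4 * N) ℤ ∣ F (2 * N) := by
  have h4N : 0 < 4 * N := by omega
  obtain ⟨ζ, hζ⟩ : ∃ ζ : ℂ, IsPrimitiveRoot ζ (4 * N) :=
    ⟨_, Complex.isPrimitiveRoot_exp _ (by omega)⟩
  rw [Polynomial.cyclotomic_eq_minpoly hζ h4N]
  apply minpoly.isIntegrallyClosed_dvd (hζ.isIntegral h4N)
  simp only [F, map_sum, map_pow, apply_ite (Polynomial.aeval ζ),
    Polynomial.aeval_X_pow, Polynomial.aeval_X, map_zero]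
  have key : ∀ m ∈ Finset.range (2 * N), ∀ n ∈ Finset.range (2 * N),
      (∑ k ∈ Finset.range (2 * N),
        ((if m.Prime ∧ Odd m then ζ ^ (k * m) else 0) *
         (if n.Prime ∧ Odd n then ζ ^ (k * n) else 0))) = 0 := by
    intro m hm n hn
    by_cases hmP : m.Prime ∧ Odd m
    · by_cases hnP : n.Prime ∧ Odd n
      · simp only [if_pos hmP, if_pos hnP]
        have hterm : ∀ k, ζ ^ (k * m) * ζ ^ (k * n) = (ζ ^ (m + n)) ^ k := by
          intro k
          rw [← pow_add, ← pow_mul]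
          ring_nf
        simp only [hterm]
        have hm3 : 3 ≤ m := by
          rcases hmP with ⟨hp, ho⟩
          have := hp.two_le
          rcases Nat.lt_or_ge m 3 with h | h
          · interval_cases m
            · exact absurd ho (by decide)
          · exact h
        have hn3 : 3 ≤ n := by
          rcases hnP with ⟨hp, ho⟩
          have := hp.two_le
          rcases Nat.lt_or_ge n 3 with h | h
          · interval_cases n
            · exact absurd ho (by decide)
          · exact h
        have hmlt := Finset.mem_range.mp hm
        have hnlt := Finset.mem_range.mp hn
        have hx1 : ζ ^ (m + n) ≠ 1 := by
          intro h
          have hdvd := (hζ.pow_eq_one_iff_dvd _).mp h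
          have := Nat.le_of_dvd (by omega) hdvd
          omega
        have hxN : (ζ ^ (m + n)) ^ (2 * N) = 1 := by
          obtain ⟨t, ht⟩ : Even (m + n) := Odd.add_odd hmP.2 hnP.2
          rw [← pow_mul]
          have : (m + n) * (2 * N) = 4 * N * t := by
            rw [ht]; ring
          rw [this, pow_mul, hζ.pow_eq_one, one_pow]
        rw [geom_sum_eq hx1, hxN, sub_self, zero_div]
      · simp [hnP]
    · simp [hmP]
  calc ∑ k ∈ Finset.range (2 * N),
        (∑ n ∈ Finset.range (2 * N), if n.Prime ∧ Odd n then ζ ^ (k * n) else 0) ^ 2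
      = ∑ k ∈ Finset.range (2 * N), ∑ m ∈ Finset.range (2 * N),
          ∑ n ∈ Finset.range (2 * N),
            ((if m.Prime ∧ Odd m then ζ ^ (k * m) else 0) *
             (if n.Prime ∧ Odd n then ζ ^ (k * n) else 0)) := by
        refine Finset.sum_congr rfl fun k _ => ?_
        rw [sq, Finset.sum_mul_sum]
    _ = ∑ m ∈ Finset.range (2 * N), ∑ k ∈ Finset.range (2 * N),
          ∑ n ∈ Finset.range (2 * N),
            ((if m.Prime ∧ Odd m then ζ ^ (k * m) else 0) *
             (if n.Prime ∧ Odd n then ζ ^ (k * n) else 0)) := Finset.sum_comm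
    _ = ∑ m ∈ Finset.range (2 * N), ∑ n ∈ Finset.range (2 * N),
          ∑ k ∈ Finset.range (2 * N),
            ((if m.Prime ∧ Odd m then ζ ^ (k * m) else 0) *
             (if n.Prime ∧ Odd n then ζ ^ (k * n) else 0)) := by
        exact Finset.sum_congr rfl fun m _ => Finset.sum_comm
    _ = 0 := by
        apply Finset.sum_eq_zero
        intro m hm
        exact Finset.sum_eq_zero fun n hn => key m hm n hn
end

section
/- For all integers m ≥ 1 and N ≥ 1, the coefficient of z^m in the polynomial F_N(z) is a nonnegative integer that is at most a(m); moreover, if N ≥ m then this coefficient equals a(m). -/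
open Finset Polynomial
open scoped Classical

noncomputable def Strip (B m : ℕ) : Finset (ℕ × ℕ × ℕ) :=
  ((Finset.range B) ×ˢ (Finset.range B) ×ˢ (Finset.range B)).filter
    (fun t => (t.2.1.Prime ∧ Odd t.2.1) ∧ (t.2.2.Prime ∧ Odd t.2.2) ∧ t.1 * (t.2.1 + t.2.2) = m)

lemma coeff_F_eq (N m : ℕ) : (F N).coeff m = ((Strip N m).card : ℤ) := by
  have key : ∀ k, ((∑ n ∈ Finset.range N,
      if n.Prime ∧ Odd n then (X : Polynomial ℤ) ^ (k * n) else 0) ^ 2).coeff m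
      = ∑ p ∈ Finset.range N, ∑ q ∈ Finset.range N,
          if ((p.Prime ∧ Odd p) ∧ (q.Prime ∧ Odd q)) ∧ k * (p + q) = m then (1 : ℤ) else 0 := by
    intro k
    rw [sq, Finset.sum_mul_sum, Polynomial.finset_sum_coeff]
    refine Finset.sum_congr rfl fun p _ => ?_
    rw [Polynomial.finset_sum_coeff]
    refine Finset.sum_congr rfl fun q _ => ?_
    split_ifs with h1 h2 h3 h4 h5 <;>
      simp_all [← pow_add, Polynomial.coeff_X_pow, Nat.mul_add] <;> tauto
  unfold F
  rw [Polynomial.finset_sum_coeff]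
  simp_rw [key]
  rw [Strip, Finset.card_filter]
  push_cast
  rw [Finset.sum_product]
  refine Finset.sum_congr rfl fun k _ => ?_
  rw [Finset.sum_product]
  refine Finset.sum_congr rfl fun p _ => Finset.sum_congr rfl fun q _ => ?_
  exact if_congr (by tauto) rfl rfl

noncomputable def Pfin (d : ℕ) : Finset (ℕ × ℕ) :=
  ((Finset.range (d+1)) ×ˢ (Finset.range (d+1))).filter
    (fun pq => pq.1.Prime ∧ Odd pq.1 ∧ pq.2.Prime ∧ Odd pq.2 ∧ pq.1 + pq.2 = d)

lemma R_eq (d : ℕ) : R d = (Pfin d).card := by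
  rw [R, ← Set.ncard_coe_finset]
  congr 1
  ext pq
  simp only [Set.mem_setOf_eq, Pfin, Finset.coe_filter, Finset.mem_product, Finset.mem_range]
  constructor
  · rintro ⟨h1, h2, h3, h4, h5⟩
    refine ⟨⟨?_, ?_⟩, h1, h2, h3, h4, h5⟩ <;> omega
  · tauto

lemma Strip_bounds {B m : ℕ} (hm : 1 ≤ m) {t : ℕ × ℕ × ℕ} (ht : t ∈ Strip B m) :
    1 ≤ t.1 ∧ t.2.1 + t.2.2 ≤ m ∧ 2 * t.1 ≤ m ∧ 2 ≤ t.2.1 ∧ 2 ≤ t.2.2 := by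
  simp only [Strip, Finset.mem_filter, Finset.mem_product, Finset.mem_range] at ht
  obtain ⟨_, ⟨pp, _⟩, ⟨qp, _⟩, heq⟩ := ht
  have hp2 := pp.two_le
  have hq2 := qp.two_le
  have hk1 : 1 ≤ t.1 := by
    rcases Nat.eq_zero_or_pos t.1 with h | h
    · rw [h, zero_mul] at heq; omega
    · exact h
  refine ⟨hk1, ?_, ?_, hp2, hq2⟩
  · calc t.2.1 + t.2.2 ≤ t.1 * (t.2.1 + t.2.2) := Nat.le_mul_of_pos_left _ hk1
    _ = m := heq
  · nlinarith
  
lemma Strip_subset (N m : ℕ) (hm : 1 ≤ m) : Strip N m ⊆ Strip (m+1) m := by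
  intro t ht
  obtain ⟨h1, h2, h3, h4, h5⟩ := Strip_bounds hm ht
  simp only [Strip, Finset.mem_filter, Finset.mem_product, Finset.mem_range] at ht ⊢
  obtain ⟨_, hrest⟩ := ht
  exact ⟨⟨by omega, by omega, by omega⟩, hrest⟩

lemma Strip_supset (N m : ℕ) (hm : 1 ≤ m) (hN : m ≤ N) : Strip (m+1) m ⊆ Strip N m := by
  intro t ht
  obtain ⟨h1, h2, h3, h4, h5⟩ := Strip_bounds hm ht
  simp only [Strip, Finset.mem_filter, Finset.mem_product, Finset.mem_range] at ht ⊢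
  obtain ⟨_, hrest⟩ := ht
  exact ⟨⟨by omega, by omega, by omega⟩, hrest⟩

lemma a_eq (m : ℕ) (hm : 1 ≤ m) : a m = (Strip (m+1) m).card := by
  have hfib : ∀ t ∈ Strip (m+1) m, t.2.1 + t.2.2 ∈ m.divisors := by
    intro t ht
    simp only [Strip, Finset.mem_filter, Finset.mem_product, Finset.mem_range] at ht
    obtain ⟨_, _, _, heq⟩ := ht
    exact Nat.mem_divisors.mpr ⟨⟨t.1, by rw [← heq, Nat.mul_comm]⟩, by omega⟩
  rw [a, Finset.card_eq_sum_card_fiberwise hfib]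
  refine Finset.sum_congr rfl fun d hd => ?_
  have hd' := Nat.mem_divisors.mp hd
  have hdpos : 0 < d := Nat.pos_of_mem_divisors hd
  have hdle : d ≤ m := Nat.le_of_dvd (by omega) hd'.1
  rw [R_eq]
  refine Finset.card_bij' (fun pq _ => ((m / d : ℕ), pq.1, pq.2)) (fun t _ => (t.2.1, t.2.2))
    ?hi ?hj ?li ?ri
  case hi =>
    intro pq hpq
    simp only [Pfin, Finset.mem_filter, Finset.mem_product, Finset.mem_range] at hpq
    obtain ⟨⟨hp, hq⟩, pp, op, qp, oq, hsum⟩ := hpq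
    simp only [Strip, Finset.mem_filter, Finset.mem_product, Finset.mem_range]
    have hdiv : m / d * d = m := Nat.div_mul_cancel hd'.1
    have hk : m / d ≤ m := Nat.div_le_self m d
    exact ⟨⟨⟨by omega, by omega, by omega⟩, ⟨pp, op⟩, ⟨qp, oq⟩, by rw [hsum]; exact hdiv⟩, hsum⟩
  case hj =>
    intro t ht
    simp only [Finset.mem_filter] at ht
    obtain ⟨ht, hsum⟩ := ht
    simp only [Strip, Finset.mem_filter, Finset.mem_product, Finset.mem_range] at ht
    obtain ⟨⟨hk, hp, hq⟩, ⟨pp, op⟩, ⟨qp, oq⟩, heq⟩ := ht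
    simp only [Pfin, Finset.mem_filter, Finset.mem_product, Finset.mem_range]
    refine ⟨⟨?_, ?_⟩, pp, op, qp, oq, hsum⟩ <;> omega
  case li =>
    intro pq _
    rfl
  case ri =>
    intro t ht
    simp only [Finset.mem_filter] at ht
    obtain ⟨ht, hsum⟩ := ht
    simp only [Strip, Finset.mem_filter, Finset.mem_product, Finset.mem_range] at ht
    obtain ⟨_, _, _, heq⟩ := ht
    have h1 : m = t.1 * d := by rw [← heq, hsum]
    have h2 : t.1 = m / d := by rw [h1, Nat.mul_div_cancel _ hdpos]
    ext <;> simp [h2]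

theorem coeff_F_le_a (m N : ℕ) (hm : 1 ≤ m) (hN : 1 ≤ N) :
    0 ≤ (F N).coeff m ∧ (F N).coeff m ≤ (a m : ℤ) ∧ (m ≤ N → (F N).coeff m = (a m : ℤ)) := by
  rw [coeff_F_eq]
  have h1 := Strip_subset N m hm
  refine ⟨by positivity, ?_, ?_⟩
  · rw [a_eq m hm]
    exact_mod_cast Finset.card_le_card h1
  · intro hmN
    rw [a_eq m hm]
    exact_mod_cast congrArg Finset.card (Finset.Subset.antisymm h1 (Strip_supset N m hm hmN))
end

section
/- As x → ∞, ∫_{x/log x}^{x−√x} t/log(x−t) dt = x²/(2 log x) + O(x²/log²x). -/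
open Asymptotics Filter intervalIntegral

set_option maxHeartbeats 1000000 in
theorem integral_t_div_log_sub_asymptotic :
    (fun x : ℝ =>
        (∫ t in (x / Real.log x)..(x - Real.sqrt x), t / Real.log (x - t)) -
          x ^ 2 / (2 * Real.log x)) =O[atTop]
      (fun x : ℝ => x ^ 2 / Real.log x ^ 2) := by
  rw [isBigO_iff]
  refine ⟨10, ?_⟩
  filter_upwards [eventually_ge_atTop (Real.exp 2)] with x hx
  have he1 : (2:ℝ) < Real.exp 1 := by
    have := Real.exp_one_gt_d9; linarith
  have he2 : (4:ℝ) < Real.exp 2 := by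
    have h : Real.exp 2 = Real.exp 1 * Real.exp 1 := by
      rw [← Real.exp_add]; norm_num
    nlinarith
  have hx4 : (4:ℝ) ≤ x := le_trans he2.le hx
  have hx0 : (0:ℝ) < x := by linarith
  set s := Real.sqrt x with hs
  have hss : s * s = x := Real.mul_self_sqrt hx0.le
  have hs0 : (0:ℝ) ≤ s := Real.sqrt_nonneg x
  have hs2 : (2:ℝ) ≤ s := by nlinarith
  set L := Real.log x with hLdef
  have hL2 : (2:ℝ) ≤ L := by
    have := Real.log_le_log (Real.exp_pos 2) hx
    rwa [Real.log_exp] at this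
  have hL0 : (0:ℝ) < L := by linarith
  have hLs : L ≤ s := by
    have hq0 : (0:ℝ) < Real.sqrt s := Real.sqrt_pos.mpr (by linarith)
    have hqq : Real.sqrt s * Real.sqrt s = s := Real.mul_self_sqrt (by linarith)
    have h1 : Real.log (Real.sqrt s) ≤ Real.sqrt s - 1 :=
      Real.log_le_sub_one_of_pos hq0
    have h2 : Real.log (Real.sqrt s) = Real.log s / 2 := Real.log_sqrt (by linarith)
    have h3 : Real.log s = L / 2 := by rw [hs, Real.log_sqrt hx0.le, hLdef]
    nlinarith [sq_nonneg (Real.sqrt s - 2)]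
  set a := x / L with ha
  set b := x - s with hb
  have hab : a ≤ b := by
    rw [ha, hb, div_le_iff₀ hL0]
    nlinarith [mul_nonneg (sub_nonneg.mpr hLs) (sub_nonneg.mpr hs2)]
  have ha0 : 0 < a := div_pos hx0 hL0
  have hkey : ∀ t ∈ Set.Icc a b, s ≤ x - t ∧ x - t ≤ x := by
    intro t ht
    constructor
    · have h2 := ht.2; rw [hb] at h2; linarith
    · have h1 := ht.1; linarith [ha0.trans_le ht.1]
  -- pointwise bound
  have hpt : ∀ t ∈ Set.Icc a b,
      0 ≤ t / Real.log (x - t) - t / L ∧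
      t / Real.log (x - t) - t / L ≤ 4*x*s/L^2 * (1 / Real.sqrt (x - t)) := by
    intro t ht
    obtain ⟨hu1, hu2⟩ := hkey t ht
    have hu0 : 0 < x - t := by linarith
    have hlgub : Real.log (x - t) ≤ L := Real.log_le_log hu0 hu2
    have hlglb : L/2 ≤ Real.log (x - t) := by
      have h1 : Real.log s ≤ Real.log (x - t) := Real.log_le_log (by linarith) hu1
      have h2 : Real.log s = L / 2 := by rw [hs, Real.log_sqrt hx0.le, hLdef]
      linarith
    have hlg0 : 0 < Real.log (x - t) := by linarith
    have ht0 : 0 < t := lt_of_lt_of_le ha0 ht.1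
    have htx : t ≤ x := by linarith
    have hsqu : 0 < Real.sqrt (x - t) := Real.sqrt_pos.mpr hu0
    have heq : t / Real.log (x - t) - t / L
        = t * (L - Real.log (x - t)) / (Real.log (x - t) * L) := by
      field_simp [hlg0.ne', hL0.ne']
    have hLlg : 0 ≤ L - Real.log (x - t) := by linarith
    constructor
    · rw [heq]
      exact div_nonneg (mul_nonneg ht0.le hLlg) (mul_nonneg hlg0.le hL0.le)
    · rw [heq]
      have key : L - Real.log (x - t) ≤ 2 * s / Real.sqrt (x - t) := by
        have h3 : L - Real.log (x - t) = 2 * Real.log (Real.sqrt (x / (x - t))) := by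
          rw [Real.log_sqrt (by positivity), Real.log_div hx0.ne' hu0.ne']; ring
        have h4 : Real.log (Real.sqrt (x / (x - t))) ≤ Real.sqrt (x / (x - t)) - 1 :=
          Real.log_le_sub_one_of_pos (Real.sqrt_pos.mpr (by positivity))
        have h5 : Real.sqrt (x / (x - t)) = s / Real.sqrt (x - t) := by
          rw [Real.sqrt_div hx0.le, hs]
        rw [h5] at h3 h4
        have h6 : 2 * s / Real.sqrt (x - t) = 2 * (s / Real.sqrt (x - t)) := by ring
        linarith
      have e2 : t * (L - Real.log (x - t)) ≤ x * (2 * s / Real.sqrt (x - t)) :=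
        mul_le_mul htx key hLlg hx0.le
      have e3 : L^2/2 ≤ Real.log (x - t) * L := by nlinarith
      have e4 : t * (L - Real.log (x - t)) / (Real.log (x - t) * L)
          ≤ x * (2 * s / Real.sqrt (x - t)) / (L^2/2) :=
        div_le_div₀ (by positivity) e2 (by positivity) e3
      have e5 : x * (2 * s / Real.sqrt (x - t)) / (L^2/2)
          = 4*x*s/L^2 * (1 / Real.sqrt (x - t)) := by
        field_simp [hsqu.ne', hL0.ne']; ring
      rw [e5] at e4; exact e4
  -- integrability
  have hfc : ContinuousOn (fun t => t / Real.log (x - t)) (Set.Icc a b) := by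
    apply ContinuousOn.div continuousOn_id
    · apply ContinuousOn.comp Real.continuousOn_log
        ((continuous_const.sub continuous_id).continuousOn)
      intro t ht
      have := (hkey t ht).1
      simp only [Set.mem_compl_iff, Set.mem_singleton_iff, id_eq]
      intro h; simp only [Pi.sub_apply, id_eq] at h; linarith
    · intro t ht
      obtain ⟨hu1, hu2⟩ := hkey t ht
      have hu0 : 0 < x - t := by linarith
      have h1 : Real.log s ≤ Real.log (x - t) := Real.log_le_log (by linarith) hu1
      have h2 : Real.log s = L / 2 := by rw [hs, Real.log_sqrt hx0.le, hLdef]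
      intro hcon; rw [hcon] at h1; rw [h2] at h1; linarith
  have hfI : IntervalIntegrable (fun t => t / Real.log (x - t)) MeasureTheory.volume a b := by
    apply ContinuousOn.intervalIntegrable
    rwa [Set.uIcc_of_le hab]
  have hgI : IntervalIntegrable (fun t => t / L) MeasureTheory.volume a b :=
    (continuous_id.div_const L).intervalIntegrable a b
  have hsqc : ContinuousOn (fun t : ℝ => 1 / Real.sqrt (x - t)) (Set.Icc a b) := by
    apply ContinuousOn.div continuousOn_const
    · exact (Real.continuous_sqrt.comp (continuous_const.sub continuous_id)).continuousOn
    · intro t ht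
      have := (hkey t ht).1
      have hu0 : 0 < x - t := by linarith
      exact (Real.sqrt_pos.mpr hu0).ne'
  have hsqI : IntervalIntegrable (fun t : ℝ => 1 / Real.sqrt (x - t))
      MeasureTheory.volume a b := by
    apply ContinuousOn.intervalIntegrable
    rwa [Set.uIcc_of_le hab]
  have hhI : IntervalIntegrable (fun t : ℝ => 4*x*s/L^2 * (1 / Real.sqrt (x - t)))
      MeasureTheory.volume a b := hsqI.const_mul _
  -- FTC
  have hftc : ∫ t in a..b, 1 / Real.sqrt (x - t)
      = (-2 * Real.sqrt (x - b)) - (-2 * Real.sqrt (x - a)) := by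
    apply intervalIntegral.integral_eq_sub_of_hasDerivAt
      (f := fun t => -2 * Real.sqrt (x - t)) _ hsqI
    intro t ht
    rw [Set.uIcc_of_le hab] at ht
    have hu0 : 0 < x - t := by
      have := (hkey t ht).1; linarith
    have h1 : HasDerivAt (fun t : ℝ => x - t) (-1) t := (hasDerivAt_id t).const_sub x
    have h2 : HasDerivAt Real.sqrt (1 / (2 * Real.sqrt (x - t))) (x - t) :=
      Real.hasDerivAt_sqrt hu0.ne'
    have h3 := (h2.comp t h1).const_mul (-2 : ℝ)
    have hsq : 0 < Real.sqrt (x - t) := Real.sqrt_pos.mpr hu0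
    convert h3 using 1
    · rfl
    · rfl
    · field_simp [hsq.ne']
  -- integral of the majorant
  have hInt1 : ∫ t in a..b, 4*x*s/L^2 * (1 / Real.sqrt (x - t)) ≤ 8 * x^2 / L^2 := by
    rw [intervalIntegral.integral_const_mul, hftc]
    have hxa : Real.sqrt (x - a) ≤ s := by
      rw [hs]; exact Real.sqrt_le_sqrt (by linarith)
    have hxb : 0 ≤ Real.sqrt (x - b) := Real.sqrt_nonneg _
    have hc : 0 ≤ 4*x*s/L^2 := by positivity
    have h7 : (-2 * Real.sqrt (x - b)) - (-2 * Real.sqrt (x - a)) ≤ 2 * s := by linarith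
    calc 4*x*s/L^2 * ((-2 * Real.sqrt (x - b)) - (-2 * Real.sqrt (x - a)))
        ≤ 4*x*s/L^2 * (2 * s) := mul_le_mul_of_nonneg_left h7 hc
      _ = 8 * x^2 / L^2 := by
          field_simp [hL0.ne']
          linear_combination 8 * hss
  -- main comparison
  have hIJ : (∫ t in a..b, t / Real.log (x - t)) - (∫ t in a..b, t / L)
      = ∫ t in a..b, (t / Real.log (x - t) - t / L) :=
    (intervalIntegral.integral_sub hfI hgI).symm
  have hnonneg : 0 ≤ (∫ t in a..b, t / Real.log (x - t)) - (∫ t in a..b, t / L) := by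
    rw [hIJ]
    exact intervalIntegral.integral_nonneg hab (fun t ht => (hpt t ht).1)
  have hdiff : (∫ t in a..b, t / Real.log (x - t)) - (∫ t in a..b, t / L)
      ≤ 8 * x^2 / L^2 := by
    rw [hIJ]
    calc (∫ t in a..b, (t / Real.log (x - t) - t / L))
        ≤ ∫ t in a..b, 4*x*s/L^2 * (1 / Real.sqrt (x - t)) :=
          intervalIntegral.integral_mono_on hab (hfI.sub hgI) hhI (fun t ht => (hpt t ht).2)
      _ ≤ 8 * x^2 / L^2 := hInt1
  -- main term
  have hJ : (∫ t in a..b, t / L) = (b^2 - a^2) / (2*L) := by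
    rw [intervalIntegral.integral_div, integral_id]; ring
  have hJerr : |(∫ t in a..b, t / L) - x^2 / (2*L)| ≤ 2 * x^2 / L^2 := by
    rw [hJ]
    have hnum : b^2 - a^2 - x^2 = -(2*x*s - x + x^2/L^2) := by
      rw [hb, ha, div_pow]
      linear_combination hss
    have hv : (b^2 - a^2) / (2*L) - x^2/(2*L) = -((2*x*s - x + x^2/L^2) / (2*L)) := by
      rw [div_sub_div_same, hnum, neg_div]
    have h2xs : x ≤ 2*x*s := by nlinarith
    have hxl2 : (0:ℝ) ≤ x^2/L^2 := by positivity
    rw [hv, abs_neg, abs_of_nonneg]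
    · have k1 : x*s/L ≤ x^2/L^2 := by
        rw [div_le_div_iff₀ hL0 (by positivity)]
        have j1 : x*s*L*L ≤ x*s*L*s :=
          mul_le_mul_of_nonneg_left hLs (by positivity)
        have j2 : x*s*L*s = x^2*L := by linear_combination x*L*hss
        nlinarith [j1, j2]
      have k2 : x^2/L^2/(2*L) ≤ x^2/L^2 :=
        div_le_self hxl2 (by linarith)
      have k4 : (2*x*s - x + x^2/L^2)/(2*L) = x*s/L - x/(2*L) + x^2/L^2/(2*L) := by
        ring
      have k5 : 0 ≤ x/(2*L) := by positivity
      have k6 : 2*x^2/L^2 = x^2/L^2 + x^2/L^2 := by ring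
      linarith
    · apply div_nonneg _ (by linarith)
      linarith
  -- conclude
  have hRHS : (0:ℝ) < x^2 / L^2 := by positivity
  simp only [Real.norm_eq_abs]
  rw [abs_of_pos hRHS]
  calc |(∫ t in a..b, t / Real.log (x - t)) - x^2 / (2*L)|
      ≤ |(∫ t in a..b, t / Real.log (x - t)) - (∫ t in a..b, t / L)|
        + |(∫ t in a..b, t / L) - x^2 / (2*L)| := abs_sub_le _ _ _
    _ ≤ 8 * x^2 / L^2 + 2 * x^2 / L^2 := by
        rw [abs_of_nonneg hnonneg]
        exact add_le_add hdiff hJerr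
    _ ≤ 10 * (x^2 / L^2) := by
        have : 8 * x^2 / L^2 + 2 * x^2 / L^2 = 10 * (x^2 / L^2) := by ring
        linarith
end

section
/- For x ≥ 3, Q(x) = ∑_{x/log x ≤ p ≤ x−√x} π(x−p) + O(x²/log³x), where the sum is over primes p in the indicated range, π is the prime counting function, and the implied constant is absolute. -/
open Classical

/-- `Q x` is the number of ordered pairs `(p, q)` of primes with `p + q ≤ x`. -/
noncomputable def Q (x : ℝ) : ℕ :=
  {pq : ℕ × ℕ | pq.1.Prime ∧ pq.2.Prime ∧ (pq.1 : ℝ) + pq.2 ≤ x}.ncard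

namespace QAux

lemma pi_eq_card (n : ℕ) :
    Nat.primeCounting n = ((Finset.range (n+1)).filter Nat.Prime).card := by
  rw [Nat.primeCounting, Nat.primeCounting', Nat.count_eq_card_filter_range]

lemma pi_le_self (n : ℕ) : Nat.primeCounting n ≤ n := by
  rw [pi_eq_card]
  calc ((Finset.range (n+1)).filter Nat.Prime).card
      ≤ (Finset.Ico 1 (n+1)).card := by
        apply Finset.card_le_card
        intro p hp
        simp only [Finset.mem_filter, Finset.mem_range] at hp
        simp only [Finset.mem_Ico]
        exact ⟨hp.2.one_lt.le.trans' (by norm_num), hp.1⟩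
    _ = n := by simp

lemma pi_split (n : ℕ) :
    Nat.primeCounting n = Nat.primeCounting (n/2)
      + ((Finset.Ico (n/2+1) (n+1)).filter Nat.Prime).card := by
  rw [pi_eq_card, pi_eq_card, Finset.range_eq_Ico,
    ← Finset.Ico_union_Ico_eq_Ico (Nat.zero_le (n/2+1)) (by omega : n/2+1 ≤ n+1),
    Finset.filter_union, Finset.card_union_of_disjoint, Finset.range_eq_Ico]
  exact Finset.disjoint_filter_filter (Finset.Ico_disjoint_Ico_consecutive (0:ℕ) (n/2+1) (n+1))

lemma pow_le (n : ℕ) :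
    (n/2+1) ^ (((Finset.Ico (n/2+1) (n+1)).filter Nat.Prime).card) ≤ 4 ^ n := by
  calc (n/2+1) ^ (((Finset.Ico (n/2+1) (n+1)).filter Nat.Prime).card)
      ≤ ∏ p ∈ (Finset.Ico (n/2+1) (n+1)).filter Nat.Prime, p := by
        apply Finset.pow_card_le_prod
        intro p hp
        simp only [Finset.mem_filter, Finset.mem_Ico] at hp
        exact hp.1.1
    _ ≤ primorial n := by
        apply Finset.prod_le_prod_of_subset_of_one_le'
        · intro p hp
          simp only [Finset.mem_filter, Finset.mem_Ico] at hp ⊢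
          simp only [Finset.mem_range]
          exact ⟨hp.1.2, hp.2⟩
        · intro i hi _
          simp only [Finset.mem_filter] at hi
          exact hi.2.one_lt.le.trans' (by norm_num)
    _ ≤ 4 ^ n := primorial_le_4_pow n

lemma count_log_le (n : ℕ) :
    (((Finset.Ico (n/2+1) (n+1)).filter Nat.Prime).card : ℝ) * Real.log ((n/2+1 : ℕ) : ℝ)
      ≤ n * Real.log 4 := by
  have h : (((n/2+1 : ℕ):ℝ)) ^ (((Finset.Ico (n/2+1) (n+1)).filter Nat.Prime).card)
      ≤ (4:ℝ) ^ n := by exact_mod_cast pow_le n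
  have h2 := Real.log_le_log (by positivity) h
  rwa [Real.log_pow, Real.log_pow] at h2

/-- Chebyshev-type upper bound: `π(n) log n ≤ 6 n`. -/
lemma cheb (n : ℕ) : (Nat.primeCounting n : ℝ) * Real.log n ≤ 6 * n := by
  induction n using Nat.strong_induction_on with
  | _ n ih =>
    rcases Nat.lt_or_ge n 256 with hn | hn
    · rcases Nat.eq_zero_or_pos n with rfl | hn0
      · simp
      have h1 : (Nat.primeCounting n : ℝ) ≤ n := by exact_mod_cast pi_le_self n
      have h2 : Real.log n ≤ 6 := by
        have : Real.log n ≤ Real.log 256 :=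
          Real.log_le_log (by exact_mod_cast hn0) (by exact_mod_cast hn.le)
        rw [show (256:ℝ) = 2^8 by norm_num, Real.log_pow] at this
        push_cast at this
        nlinarith [Real.log_two_lt_d9]
      have h3 : (0:ℝ) ≤ Real.log n := Real.log_natCast_nonneg n
      have h4 : (0:ℝ) ≤ (Nat.primeCounting n : ℝ) := by positivity
      nlinarith
    · set m := n / 2 with hm
      have ihm := ih m (by omega)
      set k := ((Finset.Ico (m+1) (n+1)).filter Nat.Prime).card with hk
      have hsplit : (Nat.primeCounting n : ℝ) = Nat.primeCounting m + k := by
        exact_mod_cast congrArg (Nat.cast (R := ℝ)) (pi_split n)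
      have hkey : (k:ℝ) * Real.log ((m+1:ℕ):ℝ) ≤ n * Real.log 4 := count_log_le n
      have hm128 : (128:ℝ) ≤ (m:ℝ) := by exact_mod_cast (by omega : (128:ℕ) ≤ m)
      have hmpos : (0:ℝ) < (m:ℝ) := by linarith
      have hlogm : Real.log 128 ≤ Real.log m := Real.log_le_log (by norm_num) hm128
      have hlog3 : Real.log 3 ≤ (1/4) * Real.log m := by
        have h81 : (4:ℝ) * Real.log 3 = Real.log 81 := by
          rw [show (81:ℝ) = 3^4 by norm_num, Real.log_pow]; push_cast; ring
        have h2 : Real.log 81 ≤ Real.log 128 := Real.log_le_log (by norm_num) (by norm_num)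
        nlinarith
      have hn3m : (n:ℝ) ≤ 3 * m := by exact_mod_cast (by omega : n ≤ 3 * m)
      have hLn : Real.log n ≤ (5/4) * Real.log m := by
        have h1 : Real.log n ≤ Real.log (3*m) :=
          Real.log_le_log (by exact_mod_cast (by omega : (0:ℕ) < n)) hn3m
        rw [Real.log_mul (by norm_num) (ne_of_gt hmpos)] at h1
        linarith
      have hLm1 : Real.log m ≤ Real.log ((m+1:ℕ):ℝ) :=
        Real.log_le_log hmpos (by push_cast; linarith)
      have hlog4 : Real.log 4 ≤ 1.3863 := by
        rw [show (4:ℝ) = 2^2 by norm_num, Real.log_pow]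
        push_cast
        nlinarith [Real.log_two_lt_d9]
      have hm_le : 2 * (m:ℝ) ≤ n := by exact_mod_cast (by omega : 2 * m ≤ n)
      have hA : (0:ℝ) ≤ (Nat.primeCounting m : ℝ) := by positivity
      have hB : (0:ℝ) ≤ (k:ℝ) := by positivity
      have hLm0 : (0:ℝ) ≤ Real.log m := Real.log_natCast_nonneg m
      have hLm10 : (0:ℝ) ≤ Real.log ((m+1:ℕ):ℝ) := Real.log_natCast_nonneg (m+1)
      have t1 : (Nat.primeCounting m : ℝ) * Real.log n
          ≤ (5/4) * ((Nat.primeCounting m : ℝ) * Real.log m) := by nlinarith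
      have t2 : (k:ℝ) * Real.log n ≤ (5/4) * ((k:ℝ) * Real.log ((m+1:ℕ):ℝ)) := by nlinarith
      have hn0 : (0:ℝ) ≤ (n:ℝ) := by positivity
      rw [hsplit, add_mul]
      nlinarith

/-- The exact identity: `Q x` equals the sum of `π(⌊x - p⌋)` over all primes `p ≤ x`. -/
lemma Q_eq (x : ℝ) (hx : 0 ≤ x) :
    Q x = ∑ p ∈ (Finset.range (⌊x⌋₊+1)).filter Nat.Prime,
      Nat.primeCounting ⌊x - (p:ℝ)⌋₊ := by
  classical
  set T : Finset (ℕ × ℕ) :=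
    ((Finset.range (⌊x⌋₊+1)) ×ˢ (Finset.range (⌊x⌋₊+1))).filter
      (fun pq => pq.1.Prime ∧ pq.2.Prime ∧ (pq.1 : ℝ) + pq.2 ≤ x) with hT
  have hmemT : ∀ pq : ℕ × ℕ, pq ∈ T ↔
      pq.1.Prime ∧ pq.2.Prime ∧ (pq.1 : ℝ) + pq.2 ≤ x := by
    intro pq
    simp only [hT, Finset.mem_filter, Finset.mem_product, Finset.mem_range, Nat.lt_succ_iff]
    constructor
    · tauto
    · rintro ⟨h1, h2, h3⟩
      have hq0 : (0:ℝ) ≤ pq.2 := Nat.cast_nonneg _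
      have hp0 : (0:ℝ) ≤ pq.1 := Nat.cast_nonneg _
      exact ⟨⟨Nat.le_floor (by linarith), Nat.le_floor (by linarith)⟩, h1, h2, h3⟩
  have hset : {pq : ℕ × ℕ | pq.1.Prime ∧ pq.2.Prime ∧ (pq.1 : ℝ) + pq.2 ≤ x} = ↑T := by
    ext pq; simp [hmemT pq]
  rw [Q, hset, Set.ncard_coe_finset]
  rw [Finset.card_eq_sum_card_fiberwise
    (f := Prod.fst) (t := Finset.range (⌊x⌋₊+1))
    (fun pq hpq => by
      rw [hT] at hpq
      simp only [Finset.mem_coe, Finset.mem_filter, Finset.mem_product] at hpq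
      exact hpq.1.1)]
  rw [Finset.sum_filter]
  apply Finset.sum_congr rfl
  intro p hp
  rw [Finset.mem_range, Nat.lt_succ_iff] at hp
  have hpx : (p : ℝ) ≤ x := le_trans (by exact_mod_cast hp) (Nat.floor_le hx)
  by_cases hprime : p.Prime
  · rw [if_pos hprime, pi_eq_card]
    symm
    apply Finset.card_bij (fun q _ => (p, q))
    · intro q hq
      simp only [Finset.mem_filter, Finset.mem_range, Nat.lt_succ_iff] at hq
      simp only [Finset.mem_filter]
      refine ⟨(hmemT (p, q)).2 ⟨hprime, hq.2, ?_⟩, trivial⟩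
      have := Nat.floor_le (by linarith : (0:ℝ) ≤ x - p)
      have hq' : (q:ℝ) ≤ (⌊x - (p:ℝ)⌋₊ : ℝ) := by exact_mod_cast hq.1
      linarith
    · intro a ha b hb hab
      simpa using congrArg Prod.snd hab
    · intro pq hpq
      simp only [Finset.mem_filter] at hpq
      obtain ⟨hpq1, hpq2⟩ := hpq
      rw [hmemT] at hpq1
      refine ⟨pq.2, ?_, ?_⟩
      · simp only [Finset.mem_filter, Finset.mem_range, Nat.lt_succ_iff]
        refine ⟨Nat.le_floor ?_, hpq1.2.1⟩
        have := hpq1.2.2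
        rw [← hpq2] at *
        linarith
      · rw [← hpq2]
  · rw [if_neg hprime]
    rw [Finset.card_eq_zero, Finset.filter_eq_empty_iff]
    intro pq hpq
    rw [hmemT] at hpq
    intro h
    exact hprime (h ▸ hpq.1)

end QAux

open QAux Finset

set_option maxHeartbeats 2000000 in
theorem Q_eq_sum_primeCounting :
    ∃ C : ℝ, 0 < C ∧ ∀ x : ℝ, 3 ≤ x →
      |(Q x : ℝ) -
          ∑ p ∈ (Finset.range (⌊x⌋₊ + 1)).filter
            (fun p : ℕ => p.Prime ∧ x / Real.log x ≤ (p : ℝ) ∧ (p : ℝ) ≤ x - Real.sqrt x),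
            (Nat.primeCounting ⌊x - (p : ℝ)⌋₊ : ℝ)| ≤
        C * (x ^ 2 / Real.log x ^ 3) := by
  refine ⟨1000000, by norm_num, fun x hx => ?_⟩
  classical
  have hx0 : (0:ℝ) < x := by linarith
  set L := Real.log x with hLdef
  have hL1 : 1 ≤ L := by
    rw [hLdef, Real.le_log_iff_exp_le hx0]
    have := Real.exp_one_lt_d9
    linarith
  have hL0 : 0 < L := by linarith
  have hsx0 : 0 ≤ Real.sqrt x := Real.sqrt_nonneg x
  have hsxx : Real.sqrt x ≤ x := by
    have h := Real.sqrt_le_sqrt (by nlinarith : x ≤ x^2)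
    rwa [Real.sqrt_sq hx0.le] at h
  set P : Finset ℕ := (Finset.range (⌊x⌋₊+1)).filter Nat.Prime with hP
  set f : ℕ → ℝ := fun p => (Nat.primeCounting ⌊x - (p:ℝ)⌋₊ : ℝ) with hf
  have hf0 : ∀ p, 0 ≤ f p := fun p => Nat.cast_nonneg _
  set A : ℕ → Prop := fun p => x / L ≤ (p:ℝ) ∧ (p:ℝ) ≤ x - Real.sqrt x with hA
  -- the sum in the statement is a sum over P.filter A
  have hSrw : (Finset.range (⌊x⌋₊ + 1)).filter
        (fun p : ℕ => p.Prime ∧ x / Real.log x ≤ (p : ℝ) ∧ (p : ℝ) ≤ x - Real.sqrt x)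
      = P.filter A := by
    rw [hP, Finset.filter_filter]
  have hQ : (Q x : ℝ) = ∑ p ∈ P, f p := by
    rw [Q_eq x hx0.le]
    push_cast
    rfl
  set D : Finset ℕ := P.filter (fun p => ¬ A p) with hD
  have hdiff : (Q x : ℝ) - ∑ p ∈ P.filter A, f p = ∑ p ∈ D, f p := by
    rw [hQ, hD, ← Finset.sum_filter_add_sum_filter_not P A f]
    ring
  rw [hSrw, hdiff, abs_of_nonneg (Finset.sum_nonneg fun p _ => hf0 p)]
  -- pieces
  set D₁ : Finset ℕ := P.filter (fun p => (p:ℝ) < x / L) with hD₁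
  set D₂ : Finset ℕ := P.filter (fun p => x - Real.sqrt x < (p:ℝ)) with hD₂
  have hDsub : D ⊆ D₁ ∪ D₂ := by
    intro p hp
    rw [hD, Finset.mem_filter] at hp
    rcases not_and_or.mp hp.2 with h | h
    · exact Finset.mem_union_left _ (Finset.mem_filter.mpr ⟨hp.1, lt_of_not_ge h⟩)
    · exact Finset.mem_union_right _ (Finset.mem_filter.mpr ⟨hp.1, lt_of_not_ge h⟩)
  have hsplit2 : ∑ p ∈ D, f p ≤ ∑ p ∈ D₁, f p + ∑ p ∈ D₂, f p := by
    calc ∑ p ∈ D, f p ≤ ∑ p ∈ D₁ ∪ D₂, f p :=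
          Finset.sum_le_sum_of_subset_of_nonneg hDsub (fun p _ _ => hf0 p)
      _ ≤ ∑ p ∈ D₁, f p + ∑ p ∈ D₂, f p := by
          have h1 : ∑ p ∈ D₁ ∪ D₂, f p + ∑ p ∈ D₁ ∩ D₂, f p
              = ∑ p ∈ D₁, f p + ∑ p ∈ D₂, f p := Finset.sum_union_inter
          have h2 : 0 ≤ ∑ p ∈ D₁ ∩ D₂, f p := Finset.sum_nonneg fun p _ => hf0 p
          linarith
  -- bound on individual terms
  have hterm : ∀ p : ℕ, f p ≤ (Nat.primeCounting ⌊x⌋₊ : ℝ) := by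
    intro p
    have : ⌊x - (p:ℝ)⌋₊ ≤ ⌊x⌋₊ := Nat.floor_le_floor (by
      have : (0:ℝ) ≤ (p:ℝ) := Nat.cast_nonneg p
      linarith)
    show (Nat.primeCounting ⌊x - (p:ℝ)⌋₊ : ℝ) ≤ (Nat.primeCounting ⌊x⌋₊ : ℝ)
    exact_mod_cast Nat.monotone_primeCounting this
  -- D₁ bounds
  have hD₁card : (D₁.card : ℝ) ≤ (Nat.primeCounting ⌊x / L⌋₊ : ℝ) := by
    have hsub : D₁ ⊆ (Finset.range (⌊x / L⌋₊+1)).filter Nat.Prime := by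
      intro p hp
      rw [hD₁, Finset.mem_filter, hP, Finset.mem_filter] at hp
      rw [Finset.mem_filter, Finset.mem_range, Nat.lt_succ_iff]
      exact ⟨Nat.le_floor hp.2.le, hp.1.2⟩
    have := Finset.card_le_card hsub
    rw [← pi_eq_card] at this
    exact_mod_cast this
  have hB1 : ∑ p ∈ D₁, f p ≤ (D₁.card : ℝ) * (Nat.primeCounting ⌊x⌋₊ : ℝ) := by
    have := Finset.sum_le_card_nsmul D₁ f _ (fun p _ => hterm p)
    rwa [nsmul_eq_mul] at this
  -- D₂ bounds
  have hB2 : ∑ p ∈ D₂, f p ≤ (D₂.card : ℝ) * Real.sqrt x := by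
    have hterm2 : ∀ p ∈ D₂, f p ≤ Real.sqrt x := by
      intro p hp
      rw [hD₂, Finset.mem_filter] at hp
      have h1 : x - (p:ℝ) ≤ Real.sqrt x := by linarith [hp.2]
      have h2 : ⌊x - (p:ℝ)⌋₊ ≤ ⌊Real.sqrt x⌋₊ := Nat.floor_le_floor h1
      have h3 : f p ≤ (⌊Real.sqrt x⌋₊ : ℝ) := by
        show (Nat.primeCounting ⌊x - (p:ℝ)⌋₊ : ℝ) ≤ (⌊Real.sqrt x⌋₊ : ℝ)
        exact_mod_cast le_trans (Nat.monotone_primeCounting h2) (pi_le_self _)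
      exact le_trans h3 (Nat.floor_le hsx0)
    have := Finset.sum_le_card_nsmul D₂ f _ hterm2
    rwa [nsmul_eq_mul] at this
  have hD₂card : (D₂.card : ℝ) ≤ Real.sqrt x + 1 := by
    have hxs0 : (0:ℝ) ≤ x - Real.sqrt x := by linarith
    have hsub : D₂ ⊆ Finset.Ioc ⌊x - Real.sqrt x⌋₊ ⌊x⌋₊ := by
      intro p hp
      rw [hD₂, Finset.mem_filter, hP, Finset.mem_filter, Finset.mem_range,
        Nat.lt_succ_iff] at hp
      rw [Finset.mem_Ioc]
      refine ⟨?_, hp.1.1⟩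
      have h1 : (⌊x - Real.sqrt x⌋₊ : ℝ) < (p:ℝ) :=
        lt_of_le_of_lt (Nat.floor_le hxs0) hp.2
      exact_mod_cast h1
    have h2 := Finset.card_le_card hsub
    rw [Nat.card_Ioc] at h2
    have h3 : ⌊x - Real.sqrt x⌋₊ ≤ ⌊x⌋₊ := Nat.floor_le_floor (by linarith)
    have h4 : ((⌊x⌋₊ - ⌊x - Real.sqrt x⌋₊ : ℕ) : ℝ) = (⌊x⌋₊ : ℝ) - (⌊x - Real.sqrt x⌋₊ : ℝ) :=
      Nat.cast_sub h3
    have h5 : (⌊x⌋₊ : ℝ) ≤ x := Nat.floor_le hx0.le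
    have h6 : x - Real.sqrt x < (⌊x - Real.sqrt x⌋₊ : ℝ) + 1 := Nat.lt_floor_add_one _
    have h7 : (D₂.card : ℝ) ≤ ((⌊x⌋₊ - ⌊x - Real.sqrt x⌋₊ : ℕ) : ℝ) := by exact_mod_cast h2
    rw [h4] at h7
    linarith
  have hT₂ : ∑ p ∈ D₂, f p ≤ 2 * x := by
    have hsq : Real.sqrt x * Real.sqrt x = x := Real.mul_self_sqrt hx0.le
    have := mul_le_mul_of_nonneg_right hD₂card hsx0
    nlinarith [hB2]
  -- case split on size of L
  rcases le_or_gt L 8 with hL8 | hL8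
  · -- small x : crude bound
    have hcard : (D.card : ℝ) ≤ x + 1 := by
      have h1 : D ⊆ Finset.range (⌊x⌋₊+1) := by
        intro p hp
        rw [hD, Finset.mem_filter, hP, Finset.mem_filter] at hp
        exact hp.1.1
      have h2 := Finset.card_le_card h1
      rw [Finset.card_range] at h2
      have h3 : (⌊x⌋₊ : ℝ) ≤ x := Nat.floor_le hx0.le
      have : (D.card : ℝ) ≤ (⌊x⌋₊ : ℝ) + 1 := by exact_mod_cast h2
      linarith
    have hterm' : ∀ p ∈ D, f p ≤ x := by
      intro p _
      refine le_trans (hterm p) ?_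
      have h1 : (Nat.primeCounting ⌊x⌋₊ : ℝ) ≤ (⌊x⌋₊ : ℝ) := by
        exact_mod_cast pi_le_self ⌊x⌋₊
      linarith [Nat.floor_le hx0.le]
    have hcrude : ∑ p ∈ D, f p ≤ (x + 1) * x := by
      have := Finset.sum_le_card_nsmul D f x hterm'
      rw [nsmul_eq_mul] at this
      have hx0' : (0:ℝ) ≤ x := hx0.le
      nlinarith
    have hL3 : L^3 ≤ 512 := by
      have h2 : L^2 ≤ 64 := by nlinarith
      nlinarith
    have hrhs : x^2 / 512 ≤ x^2 / L^3 := by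
      apply div_le_div_of_nonneg_left (by positivity) (by positivity) hL3
    have : (x+1)*x ≤ 2 * x^2 := by nlinarith
    calc ∑ p ∈ D, f p ≤ (x+1)*x := hcrude
      _ ≤ 2 * x^2 := this
      _ ≤ 1000000 * (x^2/512) := by
          have h9 : (0:ℝ) ≤ x^2 := sq_nonneg x
          linarith
      _ ≤ 1000000 * (x^2 / L^3) := by linarith [hrhs]
  · -- main case : L ≥ 8
    have hL8' : (8:ℝ) ≤ L := hL8.le
    -- basic facts
    have hlog2 : Real.log 2 < 0.6931471808 := Real.log_two_lt_d9
    have hlog2' : 0 < Real.log 2 := Real.log_pos (by norm_num)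
    have hsqx16 : 16 ≤ Real.sqrt x := by
      have hs0 : 0 < Real.sqrt x := Real.sqrt_pos.mpr hx0
      have h2 : Real.log (Real.sqrt x) = L / 2 := Real.log_sqrt hx0.le
      have h5 : Real.exp 4 ≤ Real.sqrt x := by
        rw [← Real.exp_log hs0]
        apply Real.exp_le_exp.mpr
        rw [h2]; linarith
      have h6 : (16:ℝ) ≤ Real.exp 4 := by
        have h7 := Real.exp_one_gt_d9
        have he : Real.exp 4 = (Real.exp 1)^(4:ℕ) := by
          rw [← Real.exp_nat_mul]; norm_num
        rw [he]
        calc (16:ℝ) ≤ (2.7182818283:ℝ)^(4:ℕ) := by norm_num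
          _ ≤ (Real.exp 1)^(4:ℕ) := pow_le_pow_left₀ (by norm_num) h7.le 4
      linarith
    have hLsx : L ≤ 2 * Real.sqrt x := by
      have hs0 : 0 < Real.sqrt x := by linarith
      have h1 : Real.log (Real.sqrt x) ≤ Real.sqrt x - 1 := Real.log_le_sub_one_of_pos hs0
      have h2 : Real.log (Real.sqrt x) = L / 2 := Real.log_sqrt hx0.le
      linarith
    have hsq : Real.sqrt x * Real.sqrt x = x := Real.mul_self_sqrt hx0.le
    have hxL : Real.sqrt x / 2 ≤ x / L := by
      rw [div_le_div_iff₀ (by norm_num) hL0]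
      nlinarith
    -- bound for π(⌊x⌋₊) : π(n₀) * L ≤ 7 x
    have hx256 : (256:ℝ) ≤ x := by nlinarith
    have hn₀ : (Nat.primeCounting ⌊x⌋₊ : ℝ) * L ≤ 7 * x := by
      have h1 : x - 1 < (⌊x⌋₊ : ℝ) := by
        have := Nat.lt_floor_add_one x
        linarith [Nat.lt_succ_floor x]
      have h2 : x / 2 ≤ (⌊x⌋₊ : ℝ) := by linarith
      have hn0pos : (0:ℝ) < (⌊x⌋₊ : ℝ) := by linarith
      have h3 : Real.log (x/2) ≤ Real.log (⌊x⌋₊ : ℝ) :=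
        Real.log_le_log (by linarith) h2
      have h4 : Real.log (x/2) = L - Real.log 2 := Real.log_div (ne_of_gt hx0) (by norm_num)
      have h5 : (7/8) * L ≤ Real.log (⌊x⌋₊ : ℝ) := by
        rw [h4] at h3
        nlinarith
      have h6 := cheb ⌊x⌋₊
      have h7 : (Nat.primeCounting ⌊x⌋₊ : ℝ) ≥ 0 := by positivity
      have h8 : (⌊x⌋₊:ℝ) ≤ x := Nat.floor_le hx0.le
      nlinarith
    -- bound for π(⌊x/L⌋₊) : π(n₁) * L^2 ≤ 24 x
    have hn₁ : (Nat.primeCounting ⌊x / L⌋₊ : ℝ) * L^2 ≤ 24 * x := by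
      have h1 : x / L - 1 < (⌊x / L⌋₊ : ℝ) := by
        have := Nat.lt_floor_add_one (x / L)
        linarith
      have h2 : Real.sqrt x / 4 ≤ (⌊x / L⌋₊ : ℝ) := by
        have : Real.sqrt x / 2 - 1 ≥ Real.sqrt x / 4 := by linarith
        linarith
      have hn1pos : (0:ℝ) < (⌊x / L⌋₊ : ℝ) := by linarith
      have h3 : Real.log (Real.sqrt x / 4) ≤ Real.log (⌊x / L⌋₊ : ℝ) :=
        Real.log_le_log (by linarith) h2
      have h4 : Real.log (Real.sqrt x / 4) = L/2 - Real.log 4 := by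
        rw [Real.log_div (by positivity) (by norm_num), Real.log_sqrt hx0.le]
      have hlog4 : Real.log 4 < 1.39 := by
        rw [show (4:ℝ) = 2^2 by norm_num, Real.log_pow]
        push_cast
        nlinarith
      have h5 : L/4 ≤ Real.log (⌊x / L⌋₊ : ℝ) := by
        rw [h4] at h3
        nlinarith
      have h6 := cheb ⌊x / L⌋₊
      have h7 : (Nat.primeCounting ⌊x / L⌋₊ : ℝ) ≥ 0 := by positivity
      have h8 : (⌊x / L⌋₊:ℝ) ≤ x / L := Nat.floor_le (by positivity)
      have h9 : (Nat.primeCounting ⌊x / L⌋₊ : ℝ) * L ≤ 24 * (⌊x / L⌋₊:ℝ) := by nlinarith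
      have h10 : (Nat.primeCounting ⌊x / L⌋₊ : ℝ) * L^2 ≤ 24 * (⌊x / L⌋₊:ℝ) * L := by
        nlinarith
      have h11 : 24 * (⌊x / L⌋₊:ℝ) * L ≤ 24 * x := by
        have := mul_le_mul_of_nonneg_right h8 hL0.le
        rw [div_mul_cancel₀] at this
        · nlinarith
        · exact ne_of_gt hL0
      linarith
    -- L^3 ≤ 27 x
    have hL27 : L^3 ≤ 27 * x := by
      set y := x ^ ((1:ℝ)/3) with hy
      have hy0 : 0 < y := Real.rpow_pos_of_pos hx0 _
      have hy3 : y ^ (3:ℕ) = x := by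
        rw [hy, ← Real.rpow_natCast (x ^ ((1:ℝ)/3)) 3, ← Real.rpow_mul hx0.le]
        norm_num
      have hlogy : Real.log y = L / 3 := by
        rw [hy, Real.log_rpow hx0]; ring
      have h1 : Real.log y ≤ y - 1 := Real.log_le_sub_one_of_pos hy0
      have h2 : L ≤ 3 * y := by rw [hlogy] at h1; linarith
      calc L^3 ≤ (3*y)^3 := pow_le_pow_left₀ hL0.le h2 3
        _ = 27 * x := by rw [← hy3]; ring
    -- combine
    have hT₁ : (∑ p ∈ D₁, f p) * L^3 ≤ 168 * x^2 := by
      have h1 : ∑ p ∈ D₁, f p ≤ (Nat.primeCounting ⌊x / L⌋₊ : ℝ) * (Nat.primeCounting ⌊x⌋₊ : ℝ) := by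
        refine le_trans hB1 ?_
        apply mul_le_mul_of_nonneg_right hD₁card (by positivity)
      have h2 : (∑ p ∈ D₁, f p) * L^3
          ≤ ((Nat.primeCounting ⌊x / L⌋₊ : ℝ) * L^2) * ((Nat.primeCounting ⌊x⌋₊ : ℝ) * L) := by
        have := mul_le_mul_of_nonneg_right h1 (by positivity : (0:ℝ) ≤ L^3)
        nlinarith
      have h3 : ((Nat.primeCounting ⌊x / L⌋₊ : ℝ) * L^2) * ((Nat.primeCounting ⌊x⌋₊ : ℝ) * L)
          ≤ (24 * x) * (7 * x) := by
        apply mul_le_mul hn₁ hn₀ (by positivity) (by positivity)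
      nlinarith
    have hT₂' : (∑ p ∈ D₂, f p) * L^3 ≤ 54 * x^2 := by
      have h1 : (∑ p ∈ D₂, f p) * L^3 ≤ (2*x) * (27*x) := by
        apply mul_le_mul hT₂ hL27 (by positivity)
          (by positivity)
      nlinarith
    have htotal : (∑ p ∈ D, f p) * L^3 ≤ 222 * x^2 := by
      have := mul_le_mul_of_nonneg_right hsplit2 (by positivity : (0:ℝ) ≤ L^3)
      nlinarith
    have hL3pos : (0:ℝ) < L^3 := by positivity
    have final : ∑ p ∈ D, f p ≤ 222 * x^2 / L^3 := by
      rw [le_div_iff₀ hL3pos]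
      exact htotal
    have hpos : (0:ℝ) ≤ x^2 / L^3 := by positivity
    calc ∑ p ∈ D, f p ≤ 222 * x^2 / L^3 := final
      _ = 222 * (x^2 / L^3) := by ring
      _ ≤ 1000000 * (x^2 / L^3) := by nlinarith
end
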